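/- arXiv:math/9911231 — 6 statements merged into one kernel-verified Lean document; each statement's English description precedes it below -/
import Mathlib

section
/- If κ is an uncountable regular cardinal with κ^{<κ} = κ and T is a tree of cardinality κ, then there exists an equivalence relation on the set of functions from κ to 2, definable by a Σ¹₁ formula over H(κ) with T as parameter, whose number of equivalence classes equals |{κ-branches of T}| + 1. -/
open FirstOrder Cardinal

noncomputable section

/-- The von Neumann coding of ordinals as ZF sets. -/
noncomputable def ordToZF : Ordinal.{0} → ZFSet.{0} :=
  Ordinal.lt_wf.fix fun o IH =>
    ZFSet.range fun i : o.ToType =>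
      IH ((Ordinal.ToType.mk (o := o)).symm i).1 ((Ordinal.ToType.mk (o := o)).symm i).2

theorem ordToZF_def (o : Ordinal.{0}) :
    ordToZF o = ZFSet.range fun i : o.ToType =>
      ordToZF ((Ordinal.ToType.mk (o := o)).symm i).1 := by
  rw [ordToZF, WellFounded.fix_eq]

theorem mem_ordToZF {x : ZFSet.{0}} {o : Ordinal.{0}} :
    x ∈ ordToZF o ↔ ∃ γ < o, x = ordToZF γ := by
  rw [ordToZF_def, ZFSet.mem_range]
  constructor
  · rintro ⟨i, rfl⟩
    exact ⟨_, ((Ordinal.ToType.mk (o := o)).symm i).2, rfl⟩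
  · rintro ⟨γ, hγ, rfl⟩
    exact ⟨Ordinal.ToType.mk (o := o) ⟨γ, hγ⟩, by simp⟩

theorem ordToZF_mem_ordToZF {γ o : Ordinal.{0}} (h : γ < o) : ordToZF γ ∈ ordToZF o :=
  mem_ordToZF.2 ⟨γ, h, rfl⟩

theorem ordToZF_injective : Function.Injective ordToZF := by
  have key : ∀ {a b : Ordinal.{0}}, a < b → ordToZF a ≠ ordToZF b := by
    intro a b hlt he
    have := ordToZF_mem_ordToZF hlt
    rw [he] at this
    exact ZFSet.mem_irrefl _ this
  intro a b h
  by_contra hne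
  rcases lt_or_gt_of_ne hne with hlt | hlt
  · exact key hlt h
  · exact key hlt h.symm

theorem zfMemToSet {a u : ZFSet.{0}} : a ∈ u.toSet ↔ a ∈ u := Iff.rfl

theorem zfToSetEmpty : (∅ : ZFSet.{0}).toSet = ∅ := ZFSet.coe_empty

theorem zfToSetRange {β : Type} (f : β → ZFSet.{0}) : (ZFSet.range f).toSet = Set.range f :=
  ZFSet.coe_range f

theorem toSet_ordToZF (o : Ordinal.{0}) :
    (ordToZF o).toSet = ordToZF '' {γ | γ < o} := by
  ext x
  simp only [zfMemToSet, mem_ordToZF, Set.mem_image, Set.mem_setOf_eq]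
  exact ⟨fun ⟨γ, h, e⟩ => ⟨γ, h, e.symm⟩, fun ⟨γ, h, e⟩ => ⟨γ, h, e.symm⟩⟩

theorem mk_toSet_ordToZF (o : Ordinal.{0}) :
    #(ordToZF o).toSet = Cardinal.lift.{1} o.card := by
  rw [toSet_ordToZF, Cardinal.mk_image_eq_of_injOn _ _ (ordToZF_injective.injOn)]
  exact Ordinal.mk_Iio_ordinal o

/-- `Hset κ` is H(κ), the collection of sets hereditarily of cardinality `< κ`. -/
def Hset (κ : Cardinal.{0}) : Set ZFSet.{0} :=
  {x | ZFSet.Hereditarily (fun y => #y.toSet < Cardinal.lift.{1} κ) x}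

variable {κ : Cardinal.{0}}

theorem Hset.mem_trans {x y : ZFSet.{0}} (hx : x ∈ Hset κ) (hyx : y ∈ x) : y ∈ Hset κ :=
  hx.mem hyx

theorem Hset.card (hx : x ∈ Hset κ) : #x.toSet < Cardinal.lift.{1} κ := hx.self

theorem aleph0_lt_lift' (hκ : Cardinal.aleph0 < κ) :
    Cardinal.aleph0 < Cardinal.lift.{1} κ := by
  simpa using (Cardinal.lift_lt.{0,1}).2 hκ

theorem hset_of_finite (hκ : Cardinal.aleph0 < κ) {x : ZFSet.{0}}
    (hfin : x.toSet.Finite) (hmem : ∀ y ∈ x, y ∈ Hset κ) : x ∈ Hset κ :=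
  ZFSet.hereditarily_iff.2 ⟨hfin.lt_aleph0.trans (aleph0_lt_lift' hκ), fun y hy => hmem y hy⟩

theorem empty_mem_hset (hκ : Cardinal.aleph0 < κ) : (∅ : ZFSet.{0}) ∈ Hset κ := by
  refine hset_of_finite hκ ?_ ?_
  · simp [zfToSetEmpty]
  · intro y hy; exact absurd hy (by simp)

theorem toSet_upair (a b : ZFSet.{0}) : ({a, b} : ZFSet.{0}).toSet = {a, b} := by
  ext x; simp [zfMemToSet, ZFSet.mem_pair]

theorem upair_mem_hset (hκ : Cardinal.aleph0 < κ) {a b : ZFSet.{0}}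
    (ha : a ∈ Hset κ) (hb : b ∈ Hset κ) : ({a, b} : ZFSet.{0}) ∈ Hset κ := by
  refine hset_of_finite hκ ?_ ?_
  · rw [toSet_upair]; exact (Set.finite_singleton b).insert a
  · intro y hy
    rcases ZFSet.mem_pair.1 hy with rfl | rfl <;> assumption

theorem singleton_mem_hset (hκ : Cardinal.aleph0 < κ) {a : ZFSet.{0}}
    (ha : a ∈ Hset κ) : ({a} : ZFSet.{0}) ∈ Hset κ := by
  have : ({a} : ZFSet.{0}) = ({a, a} : ZFSet.{0}) := by
    ext x; simp [ZFSet.mem_pair]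
  rw [this]; exact upair_mem_hset hκ ha ha

theorem pair_mem_hset (hκ : Cardinal.aleph0 < κ) {a b : ZFSet.{0}}
    (ha : a ∈ Hset κ) (hb : b ∈ Hset κ) : ZFSet.pair a b ∈ Hset κ := by
  have : ZFSet.pair a b = ({({a} : ZFSet.{0}), ({a, b} : ZFSet.{0})} : ZFSet.{0}) := rfl
  rw [this]
  exact upair_mem_hset hκ (singleton_mem_hset hκ ha) (upair_mem_hset hκ ha hb)

theorem ordToZF_mem_hset (hκ : Cardinal.aleph0 < κ) {o : Ordinal.{0}}
    (ho : o < κ.ord) : ordToZF o ∈ Hset κ := by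
  induction o using Ordinal.induction with
  | h o IH =>
    refine ZFSet.hereditarily_iff.2 ⟨?_, ?_⟩
    · rw [mk_toSet_ordToZF]
      exact Cardinal.lift_lt.2 (Cardinal.lt_ord.1 ho)
    · intro y hy
      rcases mem_ordToZF.1 hy with ⟨γ, hγ, rfl⟩
      exact IH γ hγ (hγ.trans ho)

/-- A subset of `Hset κ` of size `< κ` is (the `toSet` of) an element of `Hset κ`. -/
theorem exists_hset_of_small (hκ : Cardinal.aleph0 < κ) (S : Set ZFSet.{0})
    (hS : S ⊆ Hset κ) (hsmall : #S < Cardinal.lift.{1} κ) :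
    ∃ p ∈ Hset κ, p.toSet = S := by
  rcases Cardinal.lt_lift_iff.1 hsmall with ⟨c, hlt, hc⟩
  rcases Cardinal.eq.1 (show #S = #(ULift.{1} c.out) by
    rw [Cardinal.mk_uLift, Cardinal.mk_out]; exact hc.symm) with ⟨eqv⟩
  refine ⟨ZFSet.range (fun i : c.out => (eqv.symm ⟨i⟩ : ZFSet.{0})), ?_, ?_⟩
  · refine ZFSet.hereditarily_iff.2 ⟨?_, ?_⟩
    · rw [zfToSetRange]
      calc #(Set.range fun i : c.out => (eqv.symm ⟨i⟩ : ZFSet.{0}))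
          ≤ Cardinal.lift.{1} #(c.out) := by
            simpa using Cardinal.mk_range_le_lift
              (f := fun i : c.out => (eqv.symm ⟨i⟩ : ZFSet.{0}))
        _ = Cardinal.lift.{1} c := by rw [Cardinal.mk_out]
        _ < Cardinal.lift.{1} κ := Cardinal.lift_lt.2 hlt
    · intro y hy
      rw [ZFSet.mem_range] at hy
      rcases hy with ⟨i, rfl⟩
      exact hS (eqv.symm ⟨i⟩).2
  · rw [zfToSetRange]
    ext x
    constructor
    · rintro ⟨i, rfl⟩; exact (eqv.symm ⟨i⟩).2
    · intro hx
      refine ⟨(eqv ⟨x, hx⟩).down, ?_⟩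
      have h1 : (⟨(eqv ⟨x, hx⟩).down⟩ : ULift.{1} _) = eqv ⟨x, hx⟩ := rfl
      show ((eqv.symm ⟨(eqv ⟨x, hx⟩).down⟩ : S) : ZFSet) = x
      rw [h1, Equiv.symm_apply_apply]

theorem small_of_hset (S : Set ZFSet.{0}) {p : ZFSet.{0}} (hp : p ∈ Hset κ)
    (hmem : ∀ u, u ∈ Hset κ → (u ∈ p ↔ u ∈ S)) (hS : S ⊆ Hset κ) :
    Cardinal.mk S < Cardinal.lift.{1} κ := by
  have : p.toSet = S := by
    ext u
    constructor
    · intro hu; exact (hmem u (hp.mem hu)).1 hu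
    · intro hu; exact (hmem u (hS hu)).2 hu
  rw [← this]; exact hp.self

/-- The set of functions from `κ` into `2`. -/
def Fn (κ : Cardinal.{0}) : Type := (Cardinal.ord κ).ToType → Bool

/-- Relation symbols: one unary symbol `S0`, and four binary symbols `∈, S1, S2, S3`. -/
def Rels : ℕ → Type
  | 1 => PUnit
  | 2 => Fin 4
  | _ => Empty

/-- The vocabulary consisting of `∈`, a unary symbol `S0` and binary symbols `S1`, `S2`, `S3`. -/
def Lang : FirstOrder.Language := ⟨fun _ => Empty, Rels⟩

/-- The graph of `f : κ → 2`, viewed as a binary relation on sets. -/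
def codeFn {κ : Cardinal.{0}} (f : Fn κ) (a b : ZFSet.{0}) : Prop :=
  ∃ i : (Cardinal.ord κ).ToType,
    a = ordToZF ((Ordinal.ToType.mk (o := Cardinal.ord κ)).symm i).1 ∧
    b = ordToZF (if f i then 1 else 0)

def binRelAux (R0 F G H : ZFSet.{0} → ZFSet.{0} → Prop) : Fin 4 → ZFSet.{0} → ZFSet.{0} → Prop
  | 0 => R0
  | 1 => F
  | 2 => G
  | 3 => H

def relMapAux {M : Type 1} (R : Set ZFSet.{0}) (toZF : M → ZFSet.{0})
    (F G H : ZFSet.{0} → ZFSet.{0} → Prop) :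
    ∀ n, Rels n → (Fin n → M) → Prop
  | 1, _, v => toZF (v 0) ∈ R
  | 2, r, v => binRelAux (fun a b => a ∈ b) F G H r (toZF (v 0)) (toZF (v 1))
  | 0, r, _ => r.elim
  | (_+3), r, _ => r.elim

/-- The structure `(H(κ), ∈, R, f, g, h)`. -/
def HStruct (κ : Cardinal.{0}) (R : Set ZFSet.{0}) (f g h : Fn κ) :
    Lang.Structure ↥(Hset κ) where
  funMap := fun e _ => e.elim
  RelMap := fun {n} r v => relMapAux R Subtype.val (codeFn f) (codeFn g) (codeFn h) n r v

/-- `E` is a `Σ¹₁`-definable (over `H(κ)`) relation on the functions from `κ` to `2`: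
there are a first-order sentence `φ` and a parameter `R ⊆ H(κ)` such that `E f g` holds
iff for some `h : κ → 2` the structure `(H(κ), ∈, R, f, g, h)` satisfies `φ`. -/
def Sigma11Def (κ : Cardinal.{0}) (E : Fn κ → Fn κ → Prop) : Prop :=
  ∃ (φ : Lang.Sentence) (R : Set ZFSet.{0}), R ⊆ Hset κ ∧
    ∀ f g : Fn κ, E f g ↔
      ∃ h : Fn κ,
        @FirstOrder.Language.Sentence.Realize Lang ↥(Hset κ) (HStruct κ R f g h) φ

/-! ### Formula-level definitions -/

def memRel : Lang.Relations 2 := (0 : Fin 4)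
def fRel : Lang.Relations 2 := (1 : Fin 4)
def gRel : Lang.Relations 2 := (2 : Fin 4)
def RRel : Lang.Relations 1 := PUnit.unit

open FirstOrder.Language

def memF {n : ℕ} (x y : Fin n) : Lang.BoundedFormula Empty n :=
  memRel.boundedFormula₂ &x &y

def appF {n : ℕ} (s : Lang.Relations 2) (x y : Fin n) : Lang.BoundedFormula Empty n :=
  s.boundedFormula₂ &x &y

def rF {n : ℕ} (x : Fin n) : Lang.BoundedFormula Empty n :=
  RRel.boundedFormula₁ &x

def eqF {n : ℕ} (x y : Fin n) : Lang.BoundedFormula Empty n :=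
  Term.bdEqual (&x) (&y)

def sngF {n : ℕ} (w x : Fin n) : Lang.BoundedFormula Empty n :=
  ((memF (Fin.last n) w.castSucc).iff (eqF (Fin.last n) x.castSucc)).all

def upF {n : ℕ} (w x y : Fin n) : Lang.BoundedFormula Empty n :=
  ((memF (Fin.last n) w.castSucc).iff
    ((eqF (Fin.last n) x.castSucc) ⊔ (eqF (Fin.last n) y.castSucc))).all

def pairF {n : ℕ} (z x y : Fin n) : Lang.BoundedFormula Empty n :=
  ((memF (Fin.last n) z.castSucc).iff
    ((sngF (Fin.last n) x.castSucc) ⊔ (upF (Fin.last n) x.castSucc y.castSucc))).all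

def trueAtF {n : ℕ} (s : Lang.Relations 2) (x : Fin n) : Lang.BoundedFormula Empty n :=
  ((appF s x.castSucc (Fin.last n)) ⊓
    ((memF (Fin.last (n + 1)) (Fin.last n).castSucc).ex)).ex

def ordPairF {n : ℕ} (x y : Fin n) : Lang.BoundedFormula Empty n :=
  ((rF (Fin.last n)) ⊓ (pairF (Fin.last n) x.castSucc y.castSucc)).ex

def downS (s : Lang.Relations 2) : Lang.Sentence :=
  ((((ordPairF (0 : Fin 2) (1 : Fin 2)) ⊓ (trueAtF s (1 : Fin 2))).imp
    (trueAtF s (0 : Fin 2))).all).all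

def chainS (s : Lang.Relations 2) : Lang.Sentence :=
  (((((trueAtF s (0 : Fin 2)) ⊓ (trueAtF s (1 : Fin 2))) ⊓ (eqF (0 : Fin 2) (1 : Fin 2)).not).imp
    ((ordPairF (0 : Fin 2) (1 : Fin 2)) ⊔ (ordPairF (1 : Fin 2) (0 : Fin 2)))).all).all

def comprSuppS (s : Lang.Relations 2) : Lang.Sentence :=
  ((((memF (Fin.last 1) (0 : Fin 2)).iff (trueAtF s (Fin.last 1))).all).ex : Lang.BoundedFormula Empty 0)

def smallPredsS (s : Lang.Relations 2) : Lang.Sentence :=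
  (((trueAtF s (0 : Fin 1)).imp
    ((((memF (2 : Fin 3) (1 : Fin 3)).iff (ordPairF (2 : Fin 3) (0 : Fin 3))).all).ex)).all :
      Lang.BoundedFormula Empty 0)

def goodS (s : Lang.Relations 2) : Lang.Sentence :=
  (downS s ⊓ chainS s) ⊓ ((comprSuppS s).not ⊓ smallPredsS s)

def sameS : Lang.Sentence :=
  (((trueAtF fRel (0 : Fin 1)).iff (trueAtF gRel (0 : Fin 1))).all : Lang.BoundedFormula Empty 0)

def phiS : Lang.Sentence :=
  ((goodS fRel ⊓ goodS gRel) ⊓ sameS) ⊔ ((goodS fRel).not ⊓ (goodS gRel).not)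

/-! ### The coding function `iota` -/

def iota (κ : Cardinal.{0}) (i : (Cardinal.ord κ).ToType) : ZFSet.{0} :=
  ordToZF ((Ordinal.ToType.mk (o := Cardinal.ord κ)).symm i).1

theorem iota_injective (κ : Cardinal.{0}) : Function.Injective (iota κ) := by
  intro i j hij
  have := ordToZF_injective hij
  have h2 : ((Ordinal.ToType.mk (o := Cardinal.ord κ)).symm i) =
      ((Ordinal.ToType.mk (o := Cardinal.ord κ)).symm j) := Subtype.ext this
  simpa using congrArg (Ordinal.ToType.mk (o := Cardinal.ord κ)) h2

theorem iota_mem_hset (hκ : Cardinal.aleph0 < κ) (i : (Cardinal.ord κ).ToType) :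
    iota κ i ∈ Hset κ :=
  ordToZF_mem_hset hκ ((Ordinal.ToType.mk (o := Cardinal.ord κ)).symm i).2

theorem codeFn_iff {κ : Cardinal.{0}} (f : Fn κ) (a b : ZFSet.{0}) :
    codeFn f a b ↔ ∃ i, a = iota κ i ∧ b = ordToZF (if f i then 1 else 0) := Iff.rfl

theorem one_lt_ord (hκ : Cardinal.aleph0 < κ) : (1 : Ordinal.{0}) < κ.ord := by
  rw [Cardinal.lt_ord]
  simpa using (Cardinal.nat_lt_aleph0 1).trans hκ

section Sem

open FirstOrder.Language

variable {κ : Cardinal.{0}} {R : Set ZFSet.{0}} {f g h : Fn κ}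

theorem rl_mem {n : ℕ} (x y : Fin n) (v : Empty → ↥(Hset κ)) (xs : Fin n → ↥(Hset κ)) :
    @BoundedFormula.Realize Lang ↥(Hset κ) (HStruct κ R f g h) Empty n (memF x y) v xs ↔
      (xs x).val ∈ (xs y).val := Iff.rfl

theorem rl_rF {n : ℕ} (x : Fin n) (v : Empty → ↥(Hset κ)) (xs : Fin n → ↥(Hset κ)) :
    @BoundedFormula.Realize Lang ↥(Hset κ) (HStruct κ R f g h) Empty n (rF x) v xs ↔
      (xs x).val ∈ R := Iff.rfl

theorem rl_appF_f {n : ℕ} (x y : Fin n) (v : Empty → ↥(Hset κ)) (xs : Fin n → ↥(Hset κ)) :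
    @BoundedFormula.Realize Lang ↥(Hset κ) (HStruct κ R f g h) Empty n (appF fRel x y) v xs ↔
      codeFn f (xs x).val (xs y).val := Iff.rfl

theorem rl_appF_g {n : ℕ} (x y : Fin n) (v : Empty → ↥(Hset κ)) (xs : Fin n → ↥(Hset κ)) :
    @BoundedFormula.Realize Lang ↥(Hset κ) (HStruct κ R f g h) Empty n (appF gRel x y) v xs ↔
      codeFn g (xs x).val (xs y).val := Iff.rfl

theorem rl_eqF {n : ℕ} (x y : Fin n) (v : Empty → ↥(Hset κ)) (xs : Fin n → ↥(Hset κ)) :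
    @BoundedFormula.Realize Lang ↥(Hset κ) (HStruct κ R f g h) Empty n (eqF x y) v xs ↔
      xs x = xs y := by
  letI := HStruct κ R f g h
  rw [eqF, BoundedFormula.realize_bdEqual]
  simp [Term.realize]

theorem rl_sngF (hκ : Cardinal.aleph0 < κ) {n : ℕ} (w x : Fin n)
    (v : Empty → ↥(Hset κ)) (xs : Fin n → ↥(Hset κ)) :
    @BoundedFormula.Realize Lang ↥(Hset κ) (HStruct κ R f g h) Empty n (sngF w x) v xs ↔
      (xs w).val = {(xs x).val} := by
  letI := HStruct κ R f g h
  rw [sngF, BoundedFormula.realize_all]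
  simp only [BoundedFormula.realize_iff, rl_mem, rl_eqF, Fin.snoc_last, Fin.snoc_castSucc]
  constructor
  · intro H
    apply ZFSet.ext; intro u
    rw [ZFSet.mem_singleton]
    constructor
    · intro hu
      have hu' : u ∈ Hset κ := Hset.mem_trans (xs w).2 hu
      exact congrArg Subtype.val ((H ⟨u, hu'⟩).1 hu)
    · rintro rfl
      exact (H (xs x)).2 rfl
  · intro H a
    rw [H, ZFSet.mem_singleton]
    exact ⟨fun h' => Subtype.ext h', fun h' => congrArg Subtype.val h'⟩

theorem rl_upF (hκ : Cardinal.aleph0 < κ) {n : ℕ} (w x y : Fin n)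
    (v : Empty → ↥(Hset κ)) (xs : Fin n → ↥(Hset κ)) :
    @BoundedFormula.Realize Lang ↥(Hset κ) (HStruct κ R f g h) Empty n (upF w x y) v xs ↔
      (xs w).val = {(xs x).val, (xs y).val} := by
  letI := HStruct κ R f g h
  rw [upF, BoundedFormula.realize_all]
  simp only [BoundedFormula.realize_iff, BoundedFormula.realize_sup, rl_mem, rl_eqF,
    Fin.snoc_last, Fin.snoc_castSucc]
  constructor
  · intro H
    apply ZFSet.ext; intro u
    rw [ZFSet.mem_pair]
    constructor
    · intro hu
      have hu' : u ∈ Hset κ := Hset.mem_trans (xs w).2 hu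
      rcases (H ⟨u, hu'⟩).1 hu with h' | h'
      · exact Or.inl (congrArg Subtype.val h')
      · exact Or.inr (congrArg Subtype.val h')
    · rintro (rfl | rfl)
      · exact (H (xs x)).2 (Or.inl rfl)
      · exact (H (xs y)).2 (Or.inr rfl)
  · intro H a
    rw [H, ZFSet.mem_pair]
    constructor
    · rintro (h' | h')
      · exact Or.inl (Subtype.ext h')
      · exact Or.inr (Subtype.ext h')
    · rintro (rfl | rfl)
      · exact Or.inl rfl
      · exact Or.inr rfl

theorem rl_pairF (hκ : Cardinal.aleph0 < κ) {n : ℕ} (z x y : Fin n)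
    (v : Empty → ↥(Hset κ)) (xs : Fin n → ↥(Hset κ)) :
    @BoundedFormula.Realize Lang ↥(Hset κ) (HStruct κ R f g h) Empty n (pairF z x y) v xs ↔
      (xs z).val = ZFSet.pair (xs x).val (xs y).val := by
  letI := HStruct κ R f g h
  rw [pairF, BoundedFormula.realize_all]
  simp only [BoundedFormula.realize_iff, BoundedFormula.realize_sup, rl_mem,
    rl_sngF hκ, rl_upF hκ, Fin.snoc_last, Fin.snoc_castSucc]
  rw [ZFSet.pair]
  constructor
  · intro H
    apply ZFSet.ext; intro u
    rw [ZFSet.mem_pair]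
    constructor
    · intro hu
      have hu' : u ∈ Hset κ := Hset.mem_trans (xs z).2 hu
      exact (H ⟨u, hu'⟩).1 hu
    · rintro (rfl | rfl)
      · exact (H ⟨{(xs x).val}, singleton_mem_hset hκ (xs x).2⟩).2 (Or.inl rfl)
      · exact (H ⟨{(xs x).val, (xs y).val}, upair_mem_hset hκ (xs x).2 (xs y).2⟩).2 (Or.inr rfl)
  · intro H a
    rw [H, ZFSet.mem_pair]

theorem rl_ordPairF (hκ : Cardinal.aleph0 < κ) {n : ℕ} (x y : Fin n)
    (v : Empty → ↥(Hset κ)) (xs : Fin n → ↥(Hset κ)) :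
    @BoundedFormula.Realize Lang ↥(Hset κ) (HStruct κ R f g h) Empty n (ordPairF x y) v xs ↔
      ZFSet.pair (xs x).val (xs y).val ∈ R := by
  letI := HStruct κ R f g h
  rw [ordPairF, BoundedFormula.realize_ex]
  simp only [BoundedFormula.realize_inf, rl_rF, rl_pairF hκ, Fin.snoc_last, Fin.snoc_castSucc]
  constructor
  · rintro ⟨a, haR, ha⟩
    rwa [ha] at haR
  · intro hmem
    exact ⟨⟨ZFSet.pair (xs x).val (xs y).val, pair_mem_hset hκ (xs x).2 (xs y).2⟩, hmem, rfl⟩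

theorem rl_trueAtF (hκ : Cardinal.aleph0 < κ) {n : ℕ} (s : Lang.Relations 2) (k : Fn κ)
    (hs : ∀ a b : ↥(Hset κ),
      (@Structure.RelMap Lang ↥(Hset κ) (HStruct κ R f g h) 2 s ![a, b]) ↔ codeFn k a.val b.val)
    (x : Fin n) (v : Empty → ↥(Hset κ)) (xs : Fin n → ↥(Hset κ)) :
    @BoundedFormula.Realize Lang ↥(Hset κ) (HStruct κ R f g h) Empty n (trueAtF s x) v xs ↔
      ∃ i, (xs x).val = iota κ i ∧ k i = true := by
  letI := HStruct κ R f g h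
  rw [trueAtF, BoundedFormula.realize_ex]
  simp only [BoundedFormula.realize_inf, BoundedFormula.realize_ex, rl_mem,
    Fin.snoc_last, Fin.snoc_castSucc]
  have happ : ∀ a : ↥(Hset κ), (BoundedFormula.Realize (appF s x.castSucc (Fin.last n)) v
      (Fin.snoc xs a)) ↔ codeFn k (xs x).val a.val := by
    intro a
    rw [appF, BoundedFormula.realize_rel₂]
    simpa [Fin.snoc_last, Fin.snoc_castSucc, Term.realize] using hs _ _
  simp only [happ]
  constructor
  · rintro ⟨a, ⟨i, hx, hb⟩, b, hmem⟩
    refine ⟨i, hx, ?_⟩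
    by_contra hfi
    rw [Bool.not_eq_true] at hfi
    rw [hfi] at hb
    simp only [Bool.false_eq_true, if_false] at hb
    rw [hb] at hmem
    rcases mem_ordToZF.1 hmem with ⟨γ, hγ, _⟩
    exact absurd hγ (by simp)
  · rintro ⟨i, hx, hfi⟩
    refine ⟨⟨ordToZF 1, ordToZF_mem_hset hκ (one_lt_ord hκ)⟩, ⟨i, hx, by simp [hfi]⟩,
      ⟨⟨ordToZF 0, ordToZF_mem_hset hκ (zero_lt_one.trans (one_lt_ord hκ))⟩,
        ordToZF_mem_ordToZF zero_lt_one⟩⟩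

end Sem

/-! ### The tree parameter set and sentence semantics -/

section Tree

open FirstOrder.Language

variable {κ : Cardinal.{0}}

def Rparam (κ : Cardinal.{0})
    (r' : (Cardinal.ord κ).ToType → (Cardinal.ord κ).ToType → Prop) : Set ZFSet.{0} :=
  {z | ∃ i j, r' i j ∧ z = ZFSet.pair (iota κ i) (iota κ j)}

variable {r' : (Cardinal.ord κ).ToType → (Cardinal.ord κ).ToType → Prop}

theorem Rparam_subset (hκ : Cardinal.aleph0 < κ) : Rparam κ r' ⊆ Hset κ := by
  rintro z ⟨i, j, _, rfl⟩
  exact pair_mem_hset hκ (iota_mem_hset hκ i) (iota_mem_hset hκ j)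

theorem pair_mem_Rparam {a b : ZFSet.{0}} :
    ZFSet.pair a b ∈ Rparam κ r' ↔ ∃ i j, a = iota κ i ∧ b = iota κ j ∧ r' i j := by
  constructor
  · rintro ⟨i, j, hr, hz⟩
    obtain ⟨h1, h2⟩ := ZFSet.pair_injective hz
    exact ⟨i, j, h1, h2, hr⟩
  · rintro ⟨i, j, rfl, rfl, hr⟩
    exact ⟨i, j, hr, rfl⟩

/-- Small-subset comprehension over `Hset κ`. -/
theorem hset_compr_iff (hκ : Cardinal.aleph0 < κ) (s : Set (Cardinal.ord κ).ToType) :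
    (∃ p : ↥(Hset κ), ∀ u : ↥(Hset κ),
        (u.val ∈ p.val ↔ ∃ i, u.val = iota κ i ∧ i ∈ s)) ↔ #s < κ := by
  have himg : ∀ u : ZFSet.{0}, (u ∈ iota κ '' s ↔ ∃ i, u = iota κ i ∧ i ∈ s) := by
    intro u
    simp only [Set.mem_image]
    exact ⟨fun ⟨i, hi, he⟩ => ⟨i, he.symm, hi⟩, fun ⟨i, he, hi⟩ => ⟨i, hi, he.symm⟩⟩
  have hcard : #(iota κ '' s) = Cardinal.lift.{1} #s := by
    have := Cardinal.mk_image_eq_lift (iota κ) s (iota_injective κ)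
    rwa [Cardinal.lift_id'] at this
  constructor
  · rintro ⟨p, hp⟩
    have hsub : iota κ '' s ⊆ Hset κ := by
      rintro u ⟨i, _, rfl⟩
      exact iota_mem_hset hκ i
    have := small_of_hset (iota κ '' s) p.2 (fun u hu => by
      rw [hp ⟨u, hu⟩, himg u]) hsub
    rw [hcard] at this
    exact Cardinal.lift_lt.1 this
  · intro hsmall
    obtain ⟨p, hpH, hpt⟩ := exists_hset_of_small hκ (iota κ '' s)
      (by rintro u ⟨i, _, rfl⟩; exact iota_mem_hset hκ i)
      (by rw [hcard]; exact Cardinal.lift_lt.2 hsmall)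
    refine ⟨⟨p, hpH⟩, fun u => ?_⟩
    rw [← himg u.val, ← hpt]
    exact ⟨fun h' => h', fun h' => h'⟩

end Tree

section Sentences

open FirstOrder.Language

variable {κ : Cardinal.{0}} {f g h : Fn κ}
  {r' : (Cardinal.ord κ).ToType → (Cardinal.ord κ).ToType → Prop}

/-- The semantic "good" predicate: `k` codes a `κ`-branch of the tree `r'`. -/
def GoodT (κ : Cardinal.{0}) (r' : (Cardinal.ord κ).ToType → (Cardinal.ord κ).ToType → Prop)
    (k : Fn κ) : Prop :=
  (∀ i j, r' i j → k j = true → k i = true) ∧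
  (∀ i j, k i = true → k j = true → i = j ∨ r' i j ∨ r' j i) ∧
  ¬(#{i | k i = true} < κ) ∧
  (∀ i, k i = true → #{j | r' j i} < κ)

theorem rl_downS (hκ : Cardinal.aleph0 < κ) (s : Lang.Relations 2) (k : Fn κ)
    (hs : ∀ a b : ↥(Hset κ),
      (@Structure.RelMap Lang ↥(Hset κ) (HStruct κ (Rparam κ r') f g h) 2 s ![a, b]) ↔
        codeFn k a.val b.val) :
    @Sentence.Realize Lang ↥(Hset κ) (HStruct κ (Rparam κ r') f g h) (downS s) ↔
      ∀ i j, r' i j → k j = true → k i = true := by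
  letI := HStruct κ (Rparam κ r') f g h
  simp only [Sentence.Realize, Formula.Realize, downS, BoundedFormula.realize_all,
    BoundedFormula.realize_imp, BoundedFormula.realize_inf,
    rl_ordPairF hκ, rl_trueAtF hκ s k hs,
    show (1:Fin 2) = Fin.last 1 from rfl, show (0:Fin 2) = Fin.castSucc 0 from rfl,
    show (0:Fin 1) = Fin.last 0 from rfl, Fin.snoc_castSucc, Fin.snoc_last]
  constructor
  · intro H i j hij hkj
    obtain ⟨i', ha, hk⟩ := H ⟨iota κ i, iota_mem_hset hκ i⟩ ⟨iota κ j, iota_mem_hset hκ j⟩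
      ⟨pair_mem_Rparam.2 ⟨i, j, rfl, rfl, hij⟩, ⟨j, rfl, hkj⟩⟩
    obtain rfl := iota_injective κ ha
    exact hk
  · rintro H a b ⟨hpair, j', hb, hkj⟩
    obtain ⟨i1, j1, ha1, hb1, hr1⟩ := pair_mem_Rparam.1 hpair
    obtain rfl : j1 = j' := iota_injective κ (hb1.symm.trans hb)
    exact ⟨i1, ha1, H i1 j1 hr1 hkj⟩

theorem rl_chainS (hκ : Cardinal.aleph0 < κ) (s : Lang.Relations 2) (k : Fn κ)
    (hs : ∀ a b : ↥(Hset κ),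
      (@Structure.RelMap Lang ↥(Hset κ) (HStruct κ (Rparam κ r') f g h) 2 s ![a, b]) ↔
        codeFn k a.val b.val) :
    @Sentence.Realize Lang ↥(Hset κ) (HStruct κ (Rparam κ r') f g h) (chainS s) ↔
      ∀ i j, k i = true → k j = true → i = j ∨ r' i j ∨ r' j i := by
  letI := HStruct κ (Rparam κ r') f g h
  simp only [Sentence.Realize, Formula.Realize, chainS, BoundedFormula.realize_all,
    BoundedFormula.realize_imp, BoundedFormula.realize_inf, BoundedFormula.realize_sup,
    BoundedFormula.realize_not, rl_eqF,
    rl_ordPairF hκ, rl_trueAtF hκ s k hs,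
    show (1:Fin 2) = Fin.last 1 from rfl, show (0:Fin 2) = Fin.castSucc 0 from rfl,
    show (0:Fin 1) = Fin.last 0 from rfl, Fin.snoc_castSucc, Fin.snoc_last]
  constructor
  · intro H i j hki hkj
    by_cases hij : i = j
    · exact Or.inl hij
    · have := H ⟨iota κ i, iota_mem_hset hκ i⟩ ⟨iota κ j, iota_mem_hset hκ j⟩
        ⟨⟨⟨i, rfl, hki⟩, ⟨j, rfl, hkj⟩⟩,
          fun hc => hij (iota_injective κ (congrArg Subtype.val hc))⟩
      rcases this with hp | hp
      · obtain ⟨i1, j1, h1, h2, hr⟩ := pair_mem_Rparam.1 hp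
        obtain rfl := iota_injective κ h1
        obtain rfl := iota_injective κ h2
        exact Or.inr (Or.inl hr)
      · obtain ⟨i1, j1, h1, h2, hr⟩ := pair_mem_Rparam.1 hp
        obtain rfl := iota_injective κ h1
        obtain rfl := iota_injective κ h2
        exact Or.inr (Or.inr hr)
  · rintro H a b ⟨⟨⟨i, ha, hki⟩, ⟨j, hb, hkj⟩⟩, hne⟩
    rcases H i j hki hkj with rfl | hr | hr
    · exact absurd (Subtype.ext (ha.trans hb.symm)) hne
    · exact Or.inl (by rw [ha, hb]; exact pair_mem_Rparam.2 ⟨i, j, rfl, rfl, hr⟩)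
    · exact Or.inr (by rw [ha, hb]; exact pair_mem_Rparam.2 ⟨j, i, rfl, rfl, hr⟩)

theorem rl_comprSuppS (hκ : Cardinal.aleph0 < κ) (s : Lang.Relations 2) (k : Fn κ)
    (hs : ∀ a b : ↥(Hset κ),
      (@Structure.RelMap Lang ↥(Hset κ) (HStruct κ (Rparam κ r') f g h) 2 s ![a, b]) ↔
        codeFn k a.val b.val) :
    @Sentence.Realize Lang ↥(Hset κ) (HStruct κ (Rparam κ r') f g h) (comprSuppS s) ↔
      #{i | k i = true} < κ := by
  letI := HStruct κ (Rparam κ r') f g h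
  rw [← hset_compr_iff hκ {i | k i = true}]
  simp only [Sentence.Realize, Formula.Realize, comprSuppS, BoundedFormula.realize_all,
    BoundedFormula.realize_ex, BoundedFormula.realize_iff, rl_mem,
    rl_trueAtF hκ s k hs,
    show (1:Fin 2) = Fin.last 1 from rfl, show (0:Fin 2) = Fin.castSucc 0 from rfl,
    show (0:Fin 1) = Fin.last 0 from rfl, Fin.snoc_castSucc, Fin.snoc_last,
    Set.mem_setOf_eq]

theorem rl_smallPredsS (hκ : Cardinal.aleph0 < κ) (s : Lang.Relations 2) (k : Fn κ)
    (hs : ∀ a b : ↥(Hset κ),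
      (@Structure.RelMap Lang ↥(Hset κ) (HStruct κ (Rparam κ r') f g h) 2 s ![a, b]) ↔
        codeFn k a.val b.val) :
    @Sentence.Realize Lang ↥(Hset κ) (HStruct κ (Rparam κ r') f g h) (smallPredsS s) ↔
      ∀ i, k i = true → #{j | r' j i} < κ := by
  letI := HStruct κ (Rparam κ r') f g h
  simp only [Sentence.Realize, Formula.Realize, smallPredsS, BoundedFormula.realize_all,
    BoundedFormula.realize_ex, BoundedFormula.realize_iff, BoundedFormula.realize_imp,
    rl_mem, rl_ordPairF hκ, rl_trueAtF hκ s k hs,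
    show (2:Fin 3) = Fin.last 2 from rfl, show (1:Fin 3) = Fin.castSucc (1 : Fin 2) from rfl,
    show (0:Fin 3) = Fin.castSucc (0 : Fin 2) from rfl,
    show (1:Fin 2) = Fin.last 1 from rfl, show (0:Fin 2) = Fin.castSucc 0 from rfl,
    show (0:Fin 1) = Fin.last 0 from rfl, Fin.snoc_castSucc, Fin.snoc_last]
  constructor
  · rintro H i hki
    obtain ⟨p, hp⟩ := H ⟨iota κ i, iota_mem_hset hκ i⟩ ⟨i, rfl, hki⟩
    refine (hset_compr_iff hκ {j | r' j i}).1 ⟨p, fun u => ?_⟩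
    rw [hp u]
    constructor
    · intro hmem
      obtain ⟨j1, i1, hu, hι, hr⟩ := pair_mem_Rparam.1 hmem
      obtain rfl := iota_injective κ hι
      exact ⟨j1, hu, hr⟩
    · rintro ⟨j, hu, hr⟩
      rw [hu]
      exact pair_mem_Rparam.2 ⟨j, i, rfl, rfl, hr⟩
  · rintro H a ⟨i, ha, hki⟩
    obtain ⟨p, hp⟩ := (hset_compr_iff hκ {j | r' j i}).2 (H i hki)
    refine ⟨p, fun u => ?_⟩
    rw [hp u]
    constructor
    · rintro ⟨j, hu, hr⟩
      rw [hu, ha]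
      exact pair_mem_Rparam.2 ⟨j, i, rfl, rfl, hr⟩
    · intro hmem
      rw [ha] at hmem
      obtain ⟨j1, i1, hu, hι, hr⟩ := pair_mem_Rparam.1 hmem
      obtain rfl := iota_injective κ hι
      exact ⟨j1, hu, hr⟩

theorem rl_goodS (hκ : Cardinal.aleph0 < κ) (s : Lang.Relations 2) (k : Fn κ)
    (hs : ∀ a b : ↥(Hset κ),
      (@Structure.RelMap Lang ↥(Hset κ) (HStruct κ (Rparam κ r') f g h) 2 s ![a, b]) ↔
        codeFn k a.val b.val) :
    @Sentence.Realize Lang ↥(Hset κ) (HStruct κ (Rparam κ r') f g h) (goodS s) ↔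
      GoodT κ r' k := by
  letI := HStruct κ (Rparam κ r') f g h
  have : @Sentence.Realize Lang ↥(Hset κ) (HStruct κ (Rparam κ r') f g h) (goodS s) ↔
      ((@Sentence.Realize Lang ↥(Hset κ) (HStruct κ (Rparam κ r') f g h) (downS s) ∧
        @Sentence.Realize Lang ↥(Hset κ) (HStruct κ (Rparam κ r') f g h) (chainS s)) ∧
       (¬@Sentence.Realize Lang ↥(Hset κ) (HStruct κ (Rparam κ r') f g h) (comprSuppS s) ∧
        @Sentence.Realize Lang ↥(Hset κ) (HStruct κ (Rparam κ r') f g h) (smallPredsS s))) := by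
    simp only [goodS, Sentence.Realize, Formula.Realize, BoundedFormula.realize_inf,
      BoundedFormula.realize_not]
  rw [this, rl_downS hκ s k hs, rl_chainS hκ s k hs, rl_comprSuppS hκ s k hs,
    rl_smallPredsS hκ s k hs]
  unfold GoodT
  tauto

theorem rl_sameS (hκ : Cardinal.aleph0 < κ) :
    @Sentence.Realize Lang ↥(Hset κ) (HStruct κ (Rparam κ r') f g h) sameS ↔ f = g := by
  letI := HStruct κ (Rparam κ r') f g h
  simp only [Sentence.Realize, Formula.Realize, sameS, BoundedFormula.realize_all,
    BoundedFormula.realize_iff,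
    rl_trueAtF hκ fRel f (fun a b => Iff.rfl), rl_trueAtF hκ gRel g (fun a b => Iff.rfl),
    show (0:Fin 1) = Fin.last 0 from rfl, Fin.snoc_castSucc, Fin.snoc_last]
  constructor
  · intro H
    funext i
    have hi := H ⟨iota κ i, iota_mem_hset hκ i⟩
    have h1 : f i = true ↔ g i = true := by
      constructor
      · intro hfi
        obtain ⟨i', hι, hg⟩ := hi.1 ⟨i, rfl, hfi⟩
        obtain rfl := iota_injective κ hι
        exact hg
      · intro hgi
        obtain ⟨i', hι, hf⟩ := hi.2 ⟨i, rfl, hgi⟩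
        obtain rfl := iota_injective κ hι
        exact hf
    cases hf : f i <;> cases hg : g i <;> simp_all
  · rintro rfl
    exact fun a => Iff.rfl

theorem rl_phiS (hκ : Cardinal.aleph0 < κ) :
    @Sentence.Realize Lang ↥(Hset κ) (HStruct κ (Rparam κ r') f g h) phiS ↔
      ((GoodT κ r' f ∧ GoodT κ r' g ∧ f = g) ∨ (¬GoodT κ r' f ∧ ¬GoodT κ r' g)) := by
  letI := HStruct κ (Rparam κ r') f g h
  have expand : @Sentence.Realize Lang ↥(Hset κ) (HStruct κ (Rparam κ r') f g h) phiS ↔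
      (((@Sentence.Realize Lang ↥(Hset κ) (HStruct κ (Rparam κ r') f g h) (goodS fRel) ∧
         @Sentence.Realize Lang ↥(Hset κ) (HStruct κ (Rparam κ r') f g h) (goodS gRel)) ∧
        @Sentence.Realize Lang ↥(Hset κ) (HStruct κ (Rparam κ r') f g h) sameS) ∨
       (¬@Sentence.Realize Lang ↥(Hset κ) (HStruct κ (Rparam κ r') f g h) (goodS fRel) ∧
        ¬@Sentence.Realize Lang ↥(Hset κ) (HStruct κ (Rparam κ r') f g h) (goodS gRel))) := by
    simp only [phiS, Sentence.Realize, Formula.Realize, BoundedFormula.realize_sup,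
      BoundedFormula.realize_inf, BoundedFormula.realize_not]
  rw [expand, rl_goodS hκ fRel f (fun a b => Iff.rfl), rl_goodS hκ gRel g (fun a b => Iff.rfl),
    rl_sameS hκ]
  tauto

end Sentences

/-! ### Trees and branches -/

/-- `r` is a (strict) tree ordering on `α`: irreflexive, transitive, and the
predecessors of every node are well-ordered by `r`. -/
def IsTreeOrder {α : Type} (r : α → α → Prop) : Prop :=
  IsIrrefl α r ∧ IsTrans α r ∧
    ∀ t : α, IsWellOrder {s // r s t} (fun a b => r a.1 b.1)

/-- A `κ`-branch of the tree `(α, r)`: a downward-closed chain of order type `κ`. -/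
def IsKBranch {α : Type} (r : α → α → Prop) (κ : Cardinal.{0}) (B : Set α) : Prop :=
  (∀ x ∈ B, ∀ y, r y x → y ∈ B) ∧
  (∀ x ∈ B, ∀ y ∈ B, x = y ∨ r x y ∨ r y x) ∧
  Nonempty ((fun a b : ↥B => r a.1 b.1) ≃r
    ((· < ·) : (Cardinal.ord κ).ToType → (Cardinal.ord κ).ToType → Prop))

section Branches

variable {κ : Cardinal.{0}} {α : Type} {r : α → α → Prop}

/-- A downward-closed chain in a tree is well-ordered. -/
theorem chain_isWellOrder (htree : IsTreeOrder r) {B : Set α}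
    (hdown : ∀ x ∈ B, ∀ y, r y x → y ∈ B)
    (hchain : ∀ x ∈ B, ∀ y ∈ B, x = y ∨ r x y ∨ r y x) :
    IsWellOrder ↥B (fun a b : ↥B => r a.1 b.1) := by
  obtain ⟨hirr, htrans, hwo⟩ := htree
  haveI h1 : IsTrichotomous ↥B (fun a b : ↥B => r a.1 b.1) := by
    constructor
    intro a b hab hba
    rcases hchain a.1 a.2 b.1 b.2 with he | h' | h'
    · exact Subtype.ext he
    · exact absurd h' hab
    · exact absurd h' hba
  haveI h2 : IsTrans ↥B (fun a b : ↥B => r a.1 b.1) := by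
    constructor
    intro a b c hab hbc
    exact htrans.trans _ _ _ hab hbc
  haveI h3 : IsWellFounded ↥B (fun a b : ↥B => r a.1 b.1) := by
    constructor
    rw [WellFounded.wellFounded_iff_has_min]
    intro S ⟨t, ht⟩
    haveI iw := hwo t.1
    by_cases hS : ∃ s : {s // r s t.1}, ∃ hb : s.1 ∈ B, (⟨s.1, hb⟩ : ↥B) ∈ S
    · obtain ⟨m, hm, hmS⟩ := iw.wf.has_min {s : {s // r s t.1} | ∃ hb : s.1 ∈ B,
        (⟨s.1, hb⟩ : ↥B) ∈ S} hS
      obtain ⟨hmb, hmSmem⟩ := hm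
      refine ⟨⟨m.1, hmb⟩, hmSmem, ?_⟩
      intro x hx hrx
      have hxt : r x.1 t.1 := htrans.trans _ _ _ hrx (m.2)
      exact hmS ⟨x.1, hxt⟩ ⟨x.2, by simpa using hx⟩ hrx
    · refine ⟨t, ht, ?_⟩
      intro x hx hrx
      exact hS ⟨⟨x.1, hrx⟩, x.2, by simpa using hx⟩
  exact ⟨⟩

variable (e : (Cardinal.ord κ).ToType ≃ α)

/-- Lemma A: a good function codes a branch. -/
theorem goodT_isKBranch (htree : IsTreeOrder r)
    {k : Fn κ} (hk : GoodT κ (fun i j => r (e i) (e j)) k) :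
    IsKBranch r κ (e '' {i | k i = true}) := by
  obtain ⟨hdown, hchain, hbig, hsmall⟩ := hk
  set B : Set α := e '' {i | k i = true} with hB
  have hdownB : ∀ x ∈ B, ∀ y, r y x → y ∈ B := by
    rintro x ⟨i, hi, rfl⟩ y hy
    refine ⟨e.symm y, hdown (e.symm y) i (by simpa using hy) hi, by simp⟩
  have hchainB : ∀ x ∈ B, ∀ y ∈ B, x = y ∨ r x y ∨ r y x := by
    rintro x ⟨i, hi, rfl⟩ y ⟨j, hj, rfl⟩
    rcases hchain i j hi hj with rfl | h' | h'
    · exact Or.inl rfl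
    · exact Or.inr (Or.inl h')
    · exact Or.inr (Or.inr h')
  refine ⟨hdownB, hchainB, ?_⟩
  haveI iwB := chain_isWellOrder htree hdownB hchainB
  haveI : IsWellOrder (Cardinal.ord κ).ToType (· < ·) := isWellOrder_lt
  have hcardB : #↥B = κ := by
    rw [hB, Cardinal.mk_image_eq e.injective]
    exact le_antisymm (le_of_le_of_eq (Cardinal.mk_set_le _)
      (by rw [Cardinal.mk_toType, Cardinal.card_ord])) (not_lt.1 hbig)
  have htype : Ordinal.type (fun a b : ↥B => r a.1 b.1) = Cardinal.ord κ := by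
    refine le_antisymm ?_ ?_
    · by_contra hlt
      rw [not_le] at hlt
      obtain ⟨b, hb⟩ := Ordinal.typein_surj _ hlt
      have hc : #{c : ↥B // r c.1 b.1} =
          (Ordinal.typein (fun a b : ↥B => r a.1 b.1) b).card :=
        Ordinal.card_typein (r := fun a b : ↥B => r a.1 b.1) b
      rw [hb, Cardinal.card_ord] at hc
      obtain ⟨i, hi, hei⟩ := b.2
      have hinj : Function.Injective
          (fun c : {c : ↥B // r c.1 b.1} => e.symm c.1.1) := by
        intro c d hcd
        have : c.1.1 = d.1.1 := by simpa using congrArg e hcd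
        exact Subtype.ext (Subtype.ext this)
      have hle : #{c : ↥B // r c.1 b.1} ≤ #{j | r (e j) (e i)} := by
        refine ⟨⟨fun c => ⟨e.symm c.1.1, ?_⟩, fun c d hcd => hinj (by simpa using hcd)⟩⟩
        show r (e (e.symm c.1.1)) (e i)
        rw [Equiv.apply_symm_apply, hei]
        exact c.2
      rw [hc] at hle
      exact absurd (hle.trans_lt (hsmall i hi)) (lt_irrefl κ)
    · rw [Cardinal.ord_le, Ordinal.card_type, hcardB]
  rw [← Ordinal.type_toType (Cardinal.ord κ)] at htype
  exact Ordinal.type_eq.1 htype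

/-- Lemma B: a branch gives a good function. -/
theorem isKBranch_goodT (htree : IsTreeOrder r)
    {B : Set α} (hB : IsKBranch r κ B) {k : Fn κ}
    (hkB : ∀ i, k i = true ↔ e i ∈ B) :
    GoodT κ (fun i j => r (e i) (e j)) k := by
  obtain ⟨hdown, hchain, ⟨iso⟩⟩ := hB
  haveI iwB := chain_isWellOrder htree hdown hchain
  haveI : IsWellOrder (Cardinal.ord κ).ToType (· < ·) := isWellOrder_lt
  have htype : Ordinal.type (fun a b : ↥B => r a.1 b.1) = Cardinal.ord κ := by
    have h0 : Ordinal.type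
        ((· < ·) : (Cardinal.ord κ).ToType → (Cardinal.ord κ).ToType → Prop) =
        Cardinal.ord κ := Ordinal.type_toType _
    rw [← h0]
    exact Ordinal.type_eq.2 ⟨iso⟩
  refine ⟨?_, ?_, ?_, ?_⟩
  · intro i j hij hj
    exact (hkB i).2 (hdown (e j) ((hkB j).1 hj) (e i) hij)
  · intro i j hi hj
    rcases hchain (e i) ((hkB i).1 hi) (e j) ((hkB j).1 hj) with he | h' | h'
    · exact Or.inl (e.injective he)
    · exact Or.inr (Or.inl h')
    · exact Or.inr (Or.inr h')
  · rw [not_lt]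
    have hset : {i | k i = true} = e ⁻¹' B := by
      ext i; exact hkB i
    rw [hset]
    have h1 : #↥(e ⁻¹' B) = #↥B := by
      rw [← Cardinal.mk_image_eq (s := e ⁻¹' B) e.injective,
        Set.image_preimage_eq B e.surjective]
    rw [h1, ← Cardinal.card_ord κ, ← htype, Ordinal.card_type]
  · intro i hi
    have hiB : e i ∈ B := (hkB i).1 hi
    set b : ↥B := ⟨e i, hiB⟩ with hb
    have hle : #{j | r (e j) (e i)} ≤ #{c : ↥B // r c.1 b.1} := by
      refine ⟨⟨fun j => ⟨⟨e j.1, hdown (e i) hiB (e j.1) j.2⟩, j.2⟩, ?_⟩⟩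
      intro c d hcd
      have : e c.1 = e d.1 := by
        have := congrArg (fun z => (z.1.1 : α)) hcd
        simpa using this
      exact Subtype.ext (e.injective this)
    have hlt : Ordinal.typein (fun a b : ↥B => r a.1 b.1) b < Cardinal.ord κ := by
      rw [← htype]
      exact Ordinal.typein_lt_type _ b
    have hcard := Cardinal.lt_ord.1 hlt
    have hc : #{c : ↥B // r c.1 b.1} =
        (Ordinal.typein (fun a b : ↥B => r a.1 b.1) b).card :=
      Ordinal.card_typein (r := fun a b : ↥B => r a.1 b.1) b
    rw [← hc] at hcard
    exact lt_of_le_of_lt hle hcard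

theorem image_k_eq (B : Set α) {k : Fn κ} (hkB : ∀ i, k i = true ↔ e i ∈ B) :
    e '' {i | k i = true} = B := by
  ext b
  constructor
  · rintro ⟨i, hi, rfl⟩
    exact (hkB i).1 hi
  · intro hb
    exact ⟨e.symm b, (hkB _).2 (by simpa using hb), by simp⟩

end Branches

/-- If `κ` is an uncountable regular cardinal with `κ^{<κ} = κ` and `T` is a tree of
cardinality `κ`, then there is an equivalence relation on `κ → 2` which is
`Σ¹₁`-definable over `H(κ)` and has exactly `|Br_κ(T)| + 1` equivalence classes. -/
theorem sigma11_eq_rel_of_tree (κ : Cardinal.{0}) (hℵ : Cardinal.aleph0 < κ)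
    (hreg : κ.IsRegular) (hpow : κ ^< κ = κ)
    (α : Type) (r : α → α → Prop) (htree : IsTreeOrder r) (hcard : #α = κ) :
    ∃ E : Setoid (Fn κ), Sigma11Def κ (fun f g => E.r f g) ∧
      #(Quotient E) = #{B : Set α // IsKBranch r κ B} + 1 := by
  classical
  have hI : #((Cardinal.ord κ).ToType) = #α := by
    rw [Cardinal.mk_toType, Cardinal.card_ord, hcard]
  obtain ⟨e⟩ := Cardinal.eq.1 hI
  set r' : (Cardinal.ord κ).ToType → (Cardinal.ord κ).ToType → Prop :=
    fun i j => r (e i) (e j) with hr'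
  have hequiv : Equivalence (fun f g : Fn κ =>
      (GoodT κ r' f ∧ GoodT κ r' g ∧ f = g) ∨ (¬GoodT κ r' f ∧ ¬GoodT κ r' g)) := by
    refine ⟨fun f => ?_, ?_, ?_⟩
    · by_cases hf : GoodT κ r' f
      · exact Or.inl ⟨hf, hf, rfl⟩
      · exact Or.inr ⟨hf, hf⟩
    · rintro f g (⟨h1, h2, rfl⟩ | ⟨h1, h2⟩)
      · exact Or.inl ⟨h2, h1, rfl⟩
      · exact Or.inr ⟨h2, h1⟩
    · rintro f g h (⟨h1, h2, rfl⟩ | ⟨h1, h2⟩) (⟨h3, h4, rfl⟩ | ⟨h3, h4⟩)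
      · exact Or.inl ⟨h1, h4, rfl⟩
      · exact absurd h2 h3
      · exact absurd h3 h2
      · exact Or.inr ⟨h1, h4⟩
  set E : Setoid (Fn κ) := ⟨fun f g =>
    (GoodT κ r' f ∧ GoodT κ r' g ∧ f = g) ∨ (¬GoodT κ r' f ∧ ¬GoodT κ r' g), hequiv⟩ with hE
  have badex : ¬GoodT κ r' (fun _ => false) := by
    intro hG
    apply hG.2.2.1
    have hempty : {i | (fun _ => false : Fn κ) i = true} = ∅ := by
      ext i; simp
    rw [hempty, Cardinal.mk_emptyCollection]
    exact Cardinal.aleph0_pos.trans hℵ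
  refine ⟨E, ?_, ?_⟩
  · refine ⟨phiS, Rparam κ r', Rparam_subset hℵ, fun f g => ?_⟩
    constructor
    · intro hEfg
      exact ⟨f, (rl_phiS hℵ).2 hEfg⟩
    · rintro ⟨h, hreal⟩
      exact (rl_phiS hℵ).1 hreal
  · have hresp : ∀ f g : Fn κ, E.r f g →
        (if hk : GoodT κ r' f then
          (Sum.inl ⟨e '' {i | f i = true}, goodT_isKBranch e htree hk⟩ :
            {B : Set α // IsKBranch r κ B} ⊕ PUnit.{1})
         else Sum.inr PUnit.unit) =
        (if hk : GoodT κ r' g then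
          (Sum.inl ⟨e '' {i | g i = true}, goodT_isKBranch e htree hk⟩ :
            {B : Set α // IsKBranch r κ B} ⊕ PUnit.{1})
         else Sum.inr PUnit.unit) := by
      rintro f g (⟨h1, h2, rfl⟩ | ⟨h1, h2⟩)
      · rfl
      · rw [dif_neg h1, dif_neg h2]
    let Q : Quotient E ≃ ({B : Set α // IsKBranch r κ B} ⊕ PUnit.{1}) := by
      refine ⟨Quotient.lift (fun k => if hk : GoodT κ r' k then
          (Sum.inl ⟨e '' {i | k i = true}, goodT_isKBranch e htree hk⟩ :
            {B : Set α // IsKBranch r κ B} ⊕ PUnit.{1})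
         else Sum.inr PUnit.unit) hresp,
        fun x => match x with
          | Sum.inl ⟨B, hB⟩ => Quotient.mk E (fun i => decide (e i ∈ B))
          | Sum.inr _ => Quotient.mk E (fun _ => false), ?_, ?_⟩
      · intro q
        induction q using Quotient.ind with
        | _ k =>
          by_cases hk : GoodT κ r' k
          · simp only [Quotient.lift_mk, dif_pos hk]
            apply Quotient.sound
            have hχk : (fun i => decide (e i ∈ e '' {i | k i = true})) = k := by
              funext i
              have h1 : e i ∈ e '' {i | k i = true} ↔ k i = true := by
                rw [e.injective.mem_set_image]
                exact Iff.rfl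
              have h2 : decide (e i ∈ e '' {i | k i = true}) = decide (k i = true) :=
                decide_eq_decide.mpr h1
              have h3 : decide (k i = true) = k i := by cases k i <;> simp
              exact h2.trans h3
            exact Or.inl ⟨by rw [hχk]; exact hk, hk, hχk⟩
          · simp only [Quotient.lift_mk, dif_neg hk]
            exact Quotient.sound (Or.inr ⟨badex, hk⟩)
      · rintro (⟨B, hB⟩ | u)
        · have hkB : ∀ i, (fun i => decide (e i ∈ B)) i = true ↔ e i ∈ B := by
            intro i; simp
          have hgood : GoodT κ r' (fun i => decide (e i ∈ B)) :=
            isKBranch_goodT e htree hB hkB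
          simp only [Quotient.lift_mk, dif_pos hgood]
          congr 1
          exact (dif_pos hgood).trans (congrArg Sum.inl (Subtype.ext (image_k_eq e B hkB)))
        · cases u
          exact dif_neg badex
    rw [Cardinal.mk_congr Q]
    simp

end
end

section
/- Let κ be regular with κ^{<κ} = κ, let γ ≤ κ, and suppose for each i < γ there is a tree T_i of cardinality ≤ κ with exactly χ_i many κ-branches. Then there exists a tree T of cardinality ≤ κ with exactly ⋃_{i<γ} χ_i many κ-branches. -/
open Cardinal

section Aux

variable {J : Type} {δ : J → Type} (r : ∀ j, δ j → δ j → Prop)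

/-- The disjoint-union tree order on `Σ j, δ j`. -/
def SLex (r : ∀ j, δ j → δ j → Prop) : (Σ j, δ j) → (Σ j, δ j) → Prop :=
  Sigma.Lex (fun _ _ => False) r

variable {r}

theorem slex_fst {x y : Σ j, δ j} (h : SLex r x y) : x.1 = y.1 := by
  rcases Sigma.lex_iff.1 h with h | ⟨h, -⟩
  · exact h.elim
  · exact h

theorem slex_mk_iff {j : J} {a b : δ j} :
    SLex r ⟨j, a⟩ ⟨j, b⟩ ↔ r j a b := by
  constructor
  · intro h
    rcases Sigma.lex_iff.1 h with h | ⟨h, hr⟩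
    · exact h.elim
    · exact hr
  · exact fun h => Sigma.lex_iff.2 (Or.inr ⟨rfl, h⟩)

theorem slex_isTreeOrder (htree : ∀ j, IsTreeOrder (r j)) : IsTreeOrder (SLex r) := by
  refine ⟨⟨?_⟩, ⟨?_⟩, ?_⟩
  · rintro ⟨j, a⟩ h
    exact (htree j).1.irrefl a (slex_mk_iff.1 h)
  · rintro ⟨j1, a⟩ ⟨j2, b⟩ ⟨j3, c⟩ h1 h2
    obtain rfl : j1 = j2 := slex_fst h1
    obtain rfl : j1 = j3 := slex_fst h2
    exact slex_mk_iff.2 ((htree j1).2.1.trans _ _ _ (slex_mk_iff.1 h1) (slex_mk_iff.1 h2))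
  · rintro ⟨j, a⟩
    let f : RelEmbedding (fun x y : {b // r j b a} => r j x.1 y.1)
        (fun x y : {x // SLex r x ⟨j, a⟩} => SLex r x.1 y.1) :=
      { toFun := fun b => ⟨⟨j, b.1⟩, slex_mk_iff.2 b.2⟩
        inj' := by
          rintro ⟨b, hb⟩ ⟨c, hc⟩ h
          simp only [Subtype.mk.injEq] at h ⊢
          exact sigma_mk_injective h
        map_rel_iff' := by
          rintro ⟨b, hb⟩ ⟨c, hc⟩
          exact slex_mk_iff }
    have hsurj : Function.Surjective f := by
      rintro ⟨⟨j', c⟩, h⟩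
      obtain rfl : j' = j := slex_fst h
      exact ⟨⟨c, slex_mk_iff.1 h⟩, Subtype.ext rfl⟩
    have e := RelIso.ofSurjective f hsurj
    exact @RelEmbedding.isWellOrder _ _ _ _ e.symm.toRelEmbedding ((htree j).2.2 a)

variable {κ : Cardinal.{0}}

theorem branch_nonempty {α' : Type} {r' : α' → α' → Prop} (hκ : κ ≠ 0)
    {B : Set α'} (hB : IsKBranch r' κ B) : B.Nonempty := by
  obtain ⟨e⟩ := hB.2.2
  have hne : Nonempty (Cardinal.ord κ).ToType :=
    Ordinal.toType_nonempty_iff_ne_zero.2 (by simpa [Cardinal.ord_eq_zero] using hκ)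
  obtain ⟨x⟩ := hne
  exact ⟨(e.symm x).1, (e.symm x).2⟩

/-- the restricted relation on a fiber is isomorphic to that on its image -/
noncomputable def slexImageRelIso (j : J) (B' : Set (δ j)) :
    (fun a b : ↥B' => r j a.1 b.1) ≃r
      (fun x y : ↥(Sigma.mk j '' B') => SLex r x.1 y.1) := by
  let f : RelEmbedding (fun a b : ↥B' => r j a.1 b.1)
      (fun x y : ↥(Sigma.mk j '' B') => SLex r x.1 y.1) :=
    { toFun := fun b => ⟨⟨j, b.1⟩, ⟨b.1, b.2, rfl⟩⟩
      inj' := by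
        rintro ⟨b, hb⟩ ⟨c, hc⟩ h
        simp only [Subtype.mk.injEq] at h ⊢
        exact sigma_mk_injective (congrArg Subtype.val h)
      map_rel_iff' := by
        rintro ⟨b, hb⟩ ⟨c, hc⟩
        exact slex_mk_iff }
  refine RelIso.ofSurjective f ?_
  rintro ⟨⟨j', c⟩, hc⟩
  obtain ⟨b, hb, hbc⟩ := hc
  obtain rfl : j' = j := (congrArg Sigma.fst hbc).symm
  obtain rfl : b = c := sigma_mk_injective hbc
  exact ⟨⟨b, hb⟩, Subtype.ext rfl⟩

theorem isKBranch_image {j : J} {B' : Set (δ j)} (h : IsKBranch (r j) κ B') :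
    IsKBranch (SLex r) κ (Sigma.mk j '' B') := by
  obtain ⟨hdown, hchain, ⟨e⟩⟩ := h
  refine ⟨?_, ?_, ?_⟩
  · rintro x ⟨b, hb, rfl⟩ ⟨j', c⟩ hy
    obtain rfl : j' = j := slex_fst hy
    exact ⟨c, hdown b hb c (slex_mk_iff.1 hy), rfl⟩
  · rintro x ⟨b, hb, rfl⟩ y ⟨c, hc, rfl⟩
    rcases hchain b hb c hc with h | h | h
    · exact Or.inl (by rw [h])
    · exact Or.inr (Or.inl (slex_mk_iff.2 h))
    · exact Or.inr (Or.inr (slex_mk_iff.2 h))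
  · exact ⟨((slexImageRelIso j B').symm).trans e⟩

theorem isKBranch_of_sigma (hκ : κ ≠ 0) {B : Set (Σ j, δ j)}
    (hB : IsKBranch (SLex r) κ B) :
    ∃ (j : J) (B' : Set (δ j)), IsKBranch (r j) κ B' ∧ Sigma.mk j '' B' = B := by
  obtain ⟨x0, hx0⟩ := branch_nonempty hκ hB
  obtain ⟨hdown, hchain, hiso⟩ := hB
  have hfst : ∀ x ∈ B, x.1 = x0.1 := by
    intro x hx
    rcases hchain x hx x0 hx0 with h | h | h
    · rw [h]
    · exact slex_fst h
    · exact (slex_fst h).symm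
  have himg : Sigma.mk x0.1 '' (Sigma.mk x0.1 ⁻¹' B) = B := by
    apply Set.Subset.antisymm (Set.image_preimage_subset _ _)
    rintro ⟨j', c⟩ hx
    obtain rfl : j' = x0.1 := hfst _ hx
    exact ⟨c, hx, rfl⟩
  refine ⟨x0.1, Sigma.mk x0.1 ⁻¹' B, ⟨?_, ?_, ?_⟩, himg⟩
  · intro b hb c hc
    exact hdown ⟨x0.1, b⟩ hb ⟨x0.1, c⟩ (slex_mk_iff.2 hc)
  · intro b hb c hc
    rcases hchain ⟨x0.1, b⟩ hb ⟨x0.1, c⟩ hc with h | h | h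
    · exact Or.inl (sigma_mk_injective h)
    · exact Or.inr (Or.inl (slex_mk_iff.1 h))
    · exact Or.inr (Or.inr (slex_mk_iff.1 h))
  · obtain ⟨e⟩ := hiso
    refine ⟨(slexImageRelIso x0.1 (Sigma.mk x0.1 ⁻¹' B)).trans ?_⟩
    rw [himg]
    exact e

theorem sigma_branch_card (hκ : κ ≠ 0) :
    #{B : Set (Σ j, δ j) // IsKBranch (SLex r) κ B}
      = Cardinal.sum fun j => #{B : Set (δ j) // IsKBranch (r j) κ B} := by
  rw [← Cardinal.mk_sigma]
  refine (Cardinal.mk_congr (Equiv.ofBijective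
    (fun p : Σ j, {B : Set (δ j) // IsKBranch (r j) κ B} =>
      (⟨Sigma.mk p.1 '' p.2.1, isKBranch_image p.2.2⟩ :
        {B : Set (Σ j, δ j) // IsKBranch (SLex r) κ B})) ⟨?_, ?_⟩)).symm
  · rintro ⟨j1, B1, h1⟩ ⟨j2, B2, h2⟩ h
    simp only [Subtype.mk.injEq] at h
    obtain ⟨b, hb⟩ := branch_nonempty hκ h1
    have hmem : (⟨j1, b⟩ : Σ j, δ j) ∈ Sigma.mk j2 '' B2 := h ▸ ⟨b, hb, rfl⟩
    obtain ⟨c, hc, hbc⟩ := hmem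
    obtain rfl : j2 = j1 := congrArg Sigma.fst hbc
    obtain rfl : B1 = B2 := (Set.image_injective.2 sigma_mk_injective) h
    rfl
  · rintro ⟨B, hB⟩
    obtain ⟨j, B', h', himg⟩ := isKBranch_of_sigma hκ hB
    exact ⟨⟨j, B', h'⟩, Subtype.ext himg⟩

end Aux

/-- If `γ ≤ κ` (here: `#ι ≤ κ`) and for each `i` there is a tree of cardinality `≤ κ` with
exactly `χ i` many `κ`-branches, then there is a tree of cardinality `≤ κ` with exactly
`⋃ i, χ i` many `κ`-branches. -/
theorem tree_branches_union (κ : Cardinal.{0}) (hℵ : Cardinal.aleph0 < κ)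
    (hreg : κ.IsRegular) (hpow : κ ^< κ = κ)
    (ι : Type) (hι : #ι ≤ κ) (α : ι → Type) (r : ∀ i, α i → α i → Prop)
    (htree : ∀ i, IsTreeOrder (r i)) (hcard : ∀ i, #(α i) ≤ κ)
    (χ : ι → Cardinal.{0}) (hbr : ∀ i, #{B : Set (α i) // IsKBranch (r i) κ B} = χ i) :
    ∃ (β : Type) (s : β → β → Prop), IsTreeOrder s ∧ #β ≤ κ ∧
      #{B : Set β // IsKBranch s κ B} = ⨆ i, χ i := by
  have hκ0 : κ ≠ 0 := (aleph0_pos.trans hℵ).ne'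
  have key : ∀ (J : Type) (g : J → ι), #J ≤ κ →
      (Cardinal.sum fun j => χ (g j)) = ⨆ i, χ i →
      ∃ (β : Type) (s : β → β → Prop), IsTreeOrder s ∧ #β ≤ κ ∧
        #{B : Set β // IsKBranch s κ B} = ⨆ i, χ i := by
    intro J g hJ hsum
    refine ⟨Σ j, α (g j), SLex (fun j => r (g j)),
      slex_isTreeOrder (fun j => htree (g j)), ?_, ?_⟩
    · rw [Cardinal.mk_sigma]
      calc Cardinal.sum (fun j => #(α (g j)))
          ≤ Cardinal.sum (fun _ : J => κ) := Cardinal.sum_le_sum _ _ fun j => hcard (g j)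
        _ = #J * κ := Cardinal.sum_const' J κ
        _ ≤ κ * κ := mul_le_mul' hJ le_rfl
        _ = κ := Cardinal.mul_eq_self hℵ.le
    · rw [sigma_branch_card hκ0]
      simp only [hbr]
      exact hsum
  have hbdd : ∀ i, χ i ≤ ⨆ i, χ i := fun i => le_ciSup (Cardinal.bddAbove_range χ) i
  rcases le_or_gt κ (⨆ i, χ i) with hcase | hcase
  · -- the supremum is large: sum over all of ι
    apply key ι id hι
    apply le_antisymm
    · calc Cardinal.sum χ ≤ #ι * ⨆ i, χ i := Cardinal.sum_le_mk_mul_iSup χ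
        _ ≤ (⨆ i, χ i) * ⨆ i, χ i := mul_le_mul' (hι.trans hcase) le_rfl
        _ = ⨆ i, χ i := Cardinal.mul_eq_self (hℵ.le.trans hcase)
    · exact ciSup_le' fun i => Cardinal.le_sum χ i
  · by_cases hatt : ∃ i, χ i = ⨆ i, χ i
    · -- the supremum is attained
      obtain ⟨i0, hi0⟩ := hatt
      apply key PUnit (fun _ => i0)
      · rw [Cardinal.mk_punit]
        exact Cardinal.one_le_iff_ne_zero.2 hκ0
      · rw [Cardinal.sum_const', Cardinal.mk_punit, one_mul, hi0]
    · rcases isEmpty_or_nonempty ι with hE | hNE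
      · -- empty index: the supremum is 0
        apply key PEmpty (fun x => x.elim)
        · simp
        · have h0 : (Cardinal.sum fun j : PEmpty => χ j.elim) ≤ 0 := by
            calc (Cardinal.sum fun j : PEmpty => χ j.elim)
                ≤ Cardinal.sum (fun _ : PEmpty => 0) := Cardinal.sum_le_sum _ _ fun j => j.elim
              _ = #PEmpty * 0 := Cardinal.sum_const' _ _
              _ = 0 := mul_zero _
          rw [ciSup_of_empty χ, le_antisymm h0 zero_le]
          rfl
      · -- the supremum is a limit of the values: sum over a set of representatives
        have hlt : ∀ i, χ i < ⨆ i, χ i := fun i => (hbdd i).lt_of_ne fun h => hatt ⟨i, h⟩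
        have hμinf : ℵ₀ ≤ ⨆ i, χ i := by
          by_contra hcon
          push_neg at hcon
          obtain ⟨n, hn⟩ := Cardinal.lt_aleph0.1 hcon
          have hfin : (Set.range χ).Finite := by
            have hsub : Set.range χ ⊆ (fun m : ℕ => (m : Cardinal)) '' Set.Iic n := by
              rintro _ ⟨i, rfl⟩
              obtain ⟨m, hm⟩ := Cardinal.lt_aleph0.1 ((hbdd i).trans_lt hcon)
              refine ⟨m, ?_, hm.symm⟩
              have h2 := hbdd i
              rw [hm, hn] at h2
              exact_mod_cast h2
            exact ((Set.finite_Iic n).image _).subset hsub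
          obtain ⟨i, hi⟩ := (Set.range_nonempty χ).csSup_mem hfin
          exact hatt ⟨i, hi⟩
        choose sec hsec using fun c : ↥(Set.range χ) => Set.mem_range.mp c.2
        set s : Set ι := Set.range sec with hs
        have hcount : #↥s ≤ ⨆ i, χ i := by
          have hFinj : Function.Injective (fun j : ↥s =>
              (Ordinal.ToType.mk (o := (⨆ i, χ i).ord))
                ⟨(χ j.1).ord, Cardinal.ord_lt_ord.2 (hlt j.1)⟩) := by
            intro j1 j2 h
            have h2 : (χ j1.1).ord = (χ j2.1).ord :=
              congrArg Subtype.val ((Ordinal.ToType.mk (o := (⨆ i, χ i).ord)).injective h)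
            have h3 : χ j1.1 = χ j2.1 := Cardinal.ord_injective h2
            obtain ⟨c1, hc1⟩ := j1.2
            obtain ⟨c2, hc2⟩ := j2.2
            have hc : c1 = c2 := Subtype.ext (by rw [← hsec c1, ← hsec c2, hc1, hc2, h3])
            exact Subtype.ext (by rw [← hc1, ← hc2, hc])
          calc #↥s ≤ #(Ordinal.ToType (⨆ i, χ i).ord) := Cardinal.mk_le_of_injective hFinj
            _ = ⨆ i, χ i := by rw [Cardinal.mk_toType, Cardinal.card_ord]
        apply key ↥s Subtype.val (hcount.trans hcase.le)
        apply le_antisymm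
        · calc (Cardinal.sum fun j : ↥s => χ j.1)
              ≤ Cardinal.sum (fun _ : ↥s => ⨆ i, χ i) :=
                Cardinal.sum_le_sum _ _ fun j => hbdd j.1
            _ = #↥s * ⨆ i, χ i := Cardinal.sum_const' _ _
            _ ≤ (⨆ i, χ i) * ⨆ i, χ i := mul_le_mul' hcount le_rfl
            _ = ⨆ i, χ i := Cardinal.mul_eq_self hμinf
        · refine ciSup_le' fun i => ?_
          have hmem : sec ⟨χ i, Set.mem_range_self i⟩ ∈ s := Set.mem_range_self _
          have hle := Cardinal.le_sum (fun j : ↥s => χ j.1) ⟨_, hmem⟩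
          rwa [hsec ⟨χ i, Set.mem_range_self i⟩] at hle
end

section
/- Let κ be regular with κ^{<κ} = κ, let γ < κ, and suppose for each i < γ there is a tree T_i of cardinality ≤ κ with exactly χ_i many κ-branches. Then there exists a tree T of cardinality ≤ κ with exactly |∏_{i<γ} χ_i| many κ-branches. -/
open Cardinal

namespace TreeProdAux

instance (o : Ordinal.{u}) : IsWellOrder o.ToType (· < ·) := isWellOrder_lt

variable {A : Type} {r : A → A → Prop}

noncomputable def lev (ht : IsTreeOrder r) (x : A) : Ordinal :=
  @Ordinal.type {s // r s x} (fun a b => r a.1 b.1) (ht.2.2 x)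

theorem lev_lt (ht : IsTreeOrder r) {x y : A} (h : r x y) : lev ht x < lev ht y := by
  letI := ht.2.2 y
  letI := ht.2.2 x
  haveI := ht.2.1
  have key : lev ht x =
      Ordinal.typein (fun a b : {s // r s y} => r a.1 b.1) ⟨x, h⟩ := by
    rw [← Ordinal.type_subrel]
    refine Ordinal.type_eq.2 ⟨⟨⟨fun s => ⟨⟨s.1, Trans.trans s.2 h⟩, s.2⟩,
      fun s => ⟨s.1.1, s.2⟩, fun s => rfl, fun s => rfl⟩, Iff.rfl⟩⟩
  rw [key]
  exact Ordinal.typein_lt_type _ _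

theorem eq_of_lev_eq (ht : IsTreeOrder r) {x y t : A} (hx : r x t) (hy : r y t)
    (h : lev ht x = lev ht y) : x = y := by
  letI := ht.2.2 t
  rcases (haveI := ht.2.2 t; @trichotomous _ (fun a b : {s // r s t} => r a.1 b.1) _ ⟨x, hx⟩ ⟨y, hy⟩) with h1 | h1 | h1
  · exact absurd h (ne_of_lt (lev_lt ht h1))
  · exact congrArg Subtype.val h1
  · exact absurd h.symm (ne_of_lt (lev_lt ht h1))

theorem chain_eq_of_lev_eq (ht : IsTreeOrder r) {B : Set A}
    (hc : ∀ x ∈ B, ∀ y ∈ B, x = y ∨ r x y ∨ r y x) {x y : A} (hx : x ∈ B) (hy : y ∈ B)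
    (h : lev ht x = lev ht y) : x = y := by
  rcases hc x hx y hy with h1 | h1 | h1
  · exact h1
  · exact absurd h (ne_of_lt (lev_lt ht h1))
  · exact absurd h.symm (ne_of_lt (lev_lt ht h1))

theorem lev_eq_typein (ht : IsTreeOrder r) {O : Type} {ro : O → O → Prop} [IsWellOrder O ro]
    {B : Set A} (hd : ∀ x ∈ B, ∀ y, r y x → y ∈ B)
    (e : (fun a b : ↥B => r a.1 b.1) ≃r ro) {x : A} (hx : x ∈ B) :
    lev ht x = Ordinal.typein ro (e ⟨x, hx⟩) := by
  letI := ht.2.2 x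
  rw [← Ordinal.type_subrel]
  refine Ordinal.type_eq.2 ⟨⟨⟨?_, ?_, ?_, ?_⟩, ?_⟩⟩
  · exact fun s => ⟨e ⟨s.1, hd x hx s.1 s.2⟩, e.map_rel_iff.2 s.2⟩
  · refine fun b => ⟨(e.symm b.1).1, ?_⟩
    have hb : ro (e (e.symm b.1)) (e ⟨x, hx⟩) := by rw [e.apply_symm_apply]; exact b.2
    exact e.map_rel_iff.1 hb
  · intro s; simp
  · intro b; ext : 1; simp
  · intro s s'
    constructor
    · intro h; exact e.map_rel_iff.1 h
    · intro h; exact e.map_rel_iff.2 h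

theorem lev_eq_typein_pred (ht : IsTreeOrder r) {t : A} (y : {s // r s t}) :
    lev ht y.1 = @Ordinal.typein _ (fun a b : {s // r s t} => r a.1 b.1) (ht.2.2 t) y := by
  letI := ht.2.2 t
  letI := ht.2.2 y.1
  haveI := ht.2.1
  rw [← Ordinal.type_subrel]
  exact Ordinal.type_eq.2 ⟨⟨⟨fun s => ⟨⟨s.1, Trans.trans s.2 y.2⟩, s.2⟩,
    fun s => ⟨s.1.1, s.2⟩, fun s => rfl, fun s => rfl⟩, Iff.rfl⟩⟩

theorem rel_of_lev_lt (ht : IsTreeOrder r) {x y t : A} (hx : r x t) (hy : r y t)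
    (h : lev ht x < lev ht y) : r x y := by
  rcases (haveI := ht.2.2 t; @trichotomous _ (fun a b : {s // r s t} => r a.1 b.1) _ ⟨x, hx⟩ ⟨y, hy⟩) with h1 | h1 | h1
  · exact h1
  · obtain rfl : x = y := congrArg Subtype.val h1
    exact absurd h (lt_irrefl _)
  · exact absurd (h.trans (lev_lt ht h1)) (lt_irrefl _)

theorem rel_of_chain_lev_lt (ht : IsTreeOrder r) {B : Set A}
    (hc : ∀ x ∈ B, ∀ y ∈ B, x = y ∨ r x y ∨ r y x) {x y : A} (hx : x ∈ B) (hy : y ∈ B)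
    (h : lev ht x < lev ht y) : r x y := by
  rcases hc x hx y hy with h1 | h1 | h1
  · subst h1; exact absurd h (lt_irrefl _)
  · exact h1
  · exact absurd (h.trans (lev_lt ht h1)) (lt_irrefl _)

noncomputable def predAt (ht : IsTreeOrder r) (t : A) (δ : Ordinal) (h : δ < lev ht t) :
    {s // r s t} :=
  @Ordinal.enum _ (fun a b : {s // r s t} => r a.1 b.1) (ht.2.2 t) ⟨δ, h⟩

theorem lev_predAt (ht : IsTreeOrder r) (t : A) (δ : Ordinal) (h : δ < lev ht t) :
    lev ht (predAt ht t δ h).1 = δ := by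
  rw [lev_eq_typein_pred ht (predAt ht t δ h)]
  letI := ht.2.2 t
  exact Ordinal.typein_enum _ _

section Branch

variable (κ : Cardinal.{0}) {B : Set A}

noncomputable def bIso (hB : IsKBranch r κ B) :
    (fun a b : ↥B => r a.1 b.1) ≃r
      ((· < ·) : (Cardinal.ord κ).ToType → (Cardinal.ord κ).ToType → Prop) :=
  Classical.choice hB.2.2

noncomputable def belt (hB : IsKBranch r κ B) (a : (Cardinal.ord κ).ToType) : A :=
  ((bIso κ hB).symm a).1

theorem belt_mem (hB : IsKBranch r κ B) (a) : belt κ hB a ∈ B := ((bIso κ hB).symm a).2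

theorem lev_belt (ht : IsTreeOrder r) (hB : IsKBranch r κ B) (a) :
    lev ht (belt κ hB a) =
      Ordinal.typein ((· < ·) : (Cardinal.ord κ).ToType → (Cardinal.ord κ).ToType → Prop) a := by
  rw [lev_eq_typein ht hB.1 (bIso κ hB) (belt_mem κ hB a),
    show (⟨belt κ hB a, belt_mem κ hB a⟩ : ↥B) = (bIso κ hB).symm a from rfl,
    (bIso κ hB).apply_symm_apply]

theorem belt_rel (hB : IsKBranch r κ B) {a a'} (h : a < a') :
    r (belt κ hB a) (belt κ hB a') :=
  (bIso κ hB).symm.map_rel_iff.2 h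

theorem belt_eq (ht : IsTreeOrder r) (hB : IsKBranch r κ B) {x a} (hx : x ∈ B)
    (hlev : lev ht x =
      Ordinal.typein ((· < ·) : (Cardinal.ord κ).ToType → (Cardinal.ord κ).ToType → Prop) a) :
    x = belt κ hB a :=
  chain_eq_of_lev_eq ht hB.2.1 hx (belt_mem κ hB a)
    (hlev.trans (lev_belt κ ht hB a).symm)

end Branch

section ProdTree

variable {ι : Type} {α : ι → Type} {r : ∀ i, α i → α i → Prop}

/-- The product tree. -/
abbrev PT (ht : ∀ i, IsTreeOrder (r i)) (κ : Cardinal.{0}) : Type :=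
  { p : (Cardinal.ord κ).ToType × (∀ i, α i) //
    ∀ i, lev (ht i) (p.2 i) =
      Ordinal.typein ((· < ·) : (Cardinal.ord κ).ToType → (Cardinal.ord κ).ToType → Prop) p.1 }

/-- The product tree order. -/
abbrev PS (ht : ∀ i, IsTreeOrder (r i)) (κ : Cardinal.{0}) (p q : PT ht κ) : Prop :=
  p.1.1 < q.1.1 ∧ ∀ i, r i (p.1.2 i) (q.1.2 i)

variable (ht : ∀ i, IsTreeOrder (r i)) (κ : Cardinal.{0})

theorem PS_trans {p q t : PT ht κ} (h1 : PS ht κ p q) (h2 : PS ht κ q t) : PS ht κ p t :=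
  ⟨h1.1.trans h2.1, fun i => (ht i).2.1.trans _ _ _ (h1.2 i) (h2.2 i)⟩

/-- Predecessors of a node in the product tree are in order-iso with
ordinals below the node's height. -/
noncomputable def predIso (t : PT ht κ) :
    (fun p q : {p // PS ht κ p t} => PS ht κ p.1 q.1) ≃r
      (fun a b : {a : (Cardinal.ord κ).ToType // a < t.1.1} => a.1 < b.1) := by
  have coordlt : ∀ (a : (Cardinal.ord κ).ToType), a < t.1.1 → ∀ i,
      Ordinal.typein ((· < ·) : (Cardinal.ord κ).ToType → (Cardinal.ord κ).ToType → Prop) a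
        < lev (ht i) (t.1.2 i) := by
    intro a ha i
    rw [t.2 i]
    exact (Ordinal.typein_lt_typein _).2 ha
  refine ⟨⟨fun p => ⟨p.1.1.1, p.2.1⟩, fun a => ⟨⟨⟨a.1, fun i =>
      (predAt (ht i) (t.1.2 i) _ (coordlt a.1 a.2 i)).1⟩, fun i => lev_predAt _ _ _ _⟩,
      a.2, fun i => (predAt (ht i) (t.1.2 i) _ (coordlt a.1 a.2 i)).2⟩, ?_, ?_⟩, ?_⟩
  · -- left inverse
    intro p
    refine Subtype.ext (Subtype.ext (Prod.ext rfl (funext fun i => ?_)))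
    refine eq_of_lev_eq (ht i)
      (predAt (ht i) (t.1.2 i) _ (coordlt p.1.1.1 p.2.1 i)).2 (p.2.2 i) ?_
    rw [lev_predAt, p.1.2 i]
  · -- right inverse
    intro a
    exact Subtype.ext rfl
  · -- map_rel_iff
    intro p q
    show p.1.1.1 < q.1.1.1 ↔ PS ht κ p.1 q.1
    constructor
    · intro h
      refine ⟨h, fun i => ?_⟩
      refine rel_of_lev_lt (ht i) (p.2.2 i) (q.2.2 i) ?_
      rw [p.1.2 i, q.1.2 i]
      exact (Ordinal.typein_lt_typein _).2 h
    · exact fun h => h.1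

theorem PT_isTreeOrder : IsTreeOrder (PS ht κ) := by
  refine ⟨⟨fun p h => lt_irrefl _ h.1⟩, ⟨fun p q t h1 h2 => PS_trans ht κ h1 h2⟩, fun t => ?_⟩
  have inst : IsWellOrder {a : (Cardinal.ord κ).ToType // a < t.1.1}
      (fun a b => a.1 < b.1) :=
    (inferInstance : IsWellOrder _ (Subrel (· < ·) (fun a : (Cardinal.ord κ).ToType => a < t.1.1)))
  exact @RelEmbedding.isWellOrder _ _ _ _ (predIso ht κ t).toRelEmbedding inst

theorem lev_PT (t : PT ht κ) :
    lev (PT_isTreeOrder ht κ) t =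
      Ordinal.typein ((· < ·) : (Cardinal.ord κ).ToType → (Cardinal.ord κ).ToType → Prop)
        t.1.1 := by
  have inst : IsWellOrder {a : (Cardinal.ord κ).ToType // a < t.1.1}
      (fun a b => a.1 < b.1) :=
    (inferInstance : IsWellOrder _ (Subrel (· < ·) (fun a : (Cardinal.ord κ).ToType => a < t.1.1)))
  rw [← Ordinal.type_subrel]
  exact @RelIso.ordinal_type_eq _ _ _ _ ((PT_isTreeOrder ht κ).2.2 t) _ (predIso ht κ t)

/-- The candidate branch of the product tree built from branches of the factors. -/
def Gset (b : ∀ i, {B : Set (α i) // IsKBranch (r i) κ B}) : Set (PT ht κ) :=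
  {p | ∀ i, p.1.2 i ∈ (b i).1}

noncomputable def Gelt (b : ∀ i, {B : Set (α i) // IsKBranch (r i) κ B})
    (a : (Cardinal.ord κ).ToType) : PT ht κ :=
  ⟨(a, fun i => belt κ (b i).2 a), fun i => lev_belt κ (ht i) (b i).2 a⟩

theorem Gelt_mem (b) (a) : Gelt ht κ b a ∈ Gset ht κ b := fun i => belt_mem κ (b i).2 a

theorem Gelt_surj {b} {p : PT ht κ} (hp : p ∈ Gset ht κ b) : Gelt ht κ b p.1.1 = p := by
  refine Subtype.ext (Prod.ext rfl (funext fun i => ?_))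
  exact (belt_eq κ (ht i) (b i).2 (hp i) (p.2 i)).symm

theorem isKBranch_Gset (b) : IsKBranch (PS ht κ) κ (Gset ht κ b) := by
  refine ⟨?_, ?_, ?_⟩
  · intro p hp q hq i
    exact (b i).2.1 _ (hp i) _ (hq.2 i)
  · intro p hp q hq
    rcases lt_trichotomy p.1.1 q.1.1 with h | h | h
    · refine Or.inr (Or.inl ⟨h, fun i => ?_⟩)
      refine rel_of_chain_lev_lt (ht i) (b i).2.2.1 (hp i) (hq i) ?_
      rw [p.2 i, q.2 i]
      exact (Ordinal.typein_lt_typein _).2 h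
    · refine Or.inl (Subtype.ext (Prod.ext h (funext fun i => ?_)))
      refine chain_eq_of_lev_eq (ht i) (b i).2.2.1 (hp i) (hq i) ?_
      rw [p.2 i, q.2 i, h]
    · refine Or.inr (Or.inr ⟨h, fun i => ?_⟩)
      refine rel_of_chain_lev_lt (ht i) (b i).2.2.1 (hq i) (hp i) ?_
      rw [p.2 i, q.2 i]
      exact (Ordinal.typein_lt_typein _).2 h
  · refine ⟨(RelIso.mk (Equiv.ofBijective
      (fun a => ⟨Gelt ht κ b a, Gelt_mem ht κ b a⟩) ⟨?_, ?_⟩) ?_).symm⟩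
    · intro a a' h
      exact congrArg (fun p => p.1.1.1) h
    · intro p
      exact ⟨p.1.1.1, Subtype.ext (Gelt_surj ht κ p.2)⟩
    · intro a a'
      show PS ht κ (Gelt ht κ b a) (Gelt ht κ b a') ↔ a < a'
      exact ⟨fun h => h.1, fun h => ⟨h, fun i => belt_rel κ (b i).2 h⟩⟩

theorem Gset_inj_aux {b b'} (h : Gset ht κ b = Gset ht κ b') (i) : (b i).1 ⊆ (b' i).1 := by
  intro x hx
  have h1 : Gelt ht κ b (bIso κ (b i).2 ⟨x, hx⟩) ∈ Gset ht κ b' :=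
    h ▸ Gelt_mem ht κ b (bIso κ (b i).2 ⟨x, hx⟩)
  have h2 : (Gelt ht κ b (bIso κ (b i).2 ⟨x, hx⟩)).1.2 i = x := by
    show ((bIso κ (b i).2).symm (bIso κ (b i).2 ⟨x, hx⟩)).1 = x
    rw [RelIso.symm_apply_apply]
  exact h2 ▸ h1 i

theorem Gset_injective : Function.Injective (Gset ht κ) := by
  intro b b' h
  funext i
  exact Subtype.ext (Set.Subset.antisymm (Gset_inj_aux ht κ h i) (Gset_inj_aux ht κ h.symm i))

/-- The `i`-th component branch extracted from a branch of the product tree. -/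
def Fset (B : Set (PT ht κ)) (i : ι) : Set (α i) :=
  {x | ∃ p ∈ B, x = p.1.2 i ∨ r i x (p.1.2 i)}

variable {B : Set (PT ht κ)}

theorem belt_fst (hB : IsKBranch (PS ht κ) κ B) (a) : (belt κ hB a).1.1 = a := by
  have h := lev_eq_typein (PT_isTreeOrder ht κ) hB.1 (bIso κ hB) (belt_mem κ hB a)
  rw [lev_PT,
    show (⟨belt κ hB a, belt_mem κ hB a⟩ : ↥B) = (bIso κ hB).symm a from rfl,
    (bIso κ hB).apply_symm_apply] at h
  exact Ordinal.typein_injective _ h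

theorem self_eq_belt (hB : IsKBranch (PS ht κ) κ B) {p : PT ht κ} (hp : p ∈ B) :
    p = belt κ hB p.1.1 :=
  belt_eq κ (PT_isTreeOrder ht κ) hB hp (lev_PT ht κ p)

theorem isKBranch_Fset (hB : IsKBranch (PS ht κ) κ B) (i : ι) :
    IsKBranch (r i) κ (Fset ht κ B i) := by
  have hlevF : ∀ a, lev (ht i) ((belt κ hB a).1.2 i) =
      Ordinal.typein ((· < ·) : (Cardinal.ord κ).ToType → (Cardinal.ord κ).ToType → Prop) a := by
    intro a
    rw [(belt κ hB a).2 i, belt_fst ht κ hB a]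
  refine ⟨?_, ?_, ?_⟩
  · rintro x ⟨p, hp, hx⟩ y hy
    refine ⟨p, hp, Or.inr ?_⟩
    rcases hx with rfl | hx
    · exact hy
    · exact (ht i).2.1.trans _ _ _ hy hx
  · rintro x ⟨p, hp, hx⟩ y ⟨q, hq, hy⟩
    -- reduce to a common top node
    obtain ⟨T, hxT, hyT⟩ : ∃ T : α i, (x = T ∨ r i x T) ∧ (y = T ∨ r i y T) := by
      rcases hB.2.1 p hp q hq with rfl | hpq | hqp
      · exact ⟨p.1.2 i, hx, hy⟩
      · refine ⟨q.1.2 i, ?_, hy⟩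
        rcases hx with rfl | hx
        · exact Or.inr (hpq.2 i)
        · exact Or.inr ((ht i).2.1.trans _ _ _ hx (hpq.2 i))
      · refine ⟨p.1.2 i, hx, ?_⟩
        rcases hy with rfl | hy
        · exact Or.inr (hqp.2 i)
        · exact Or.inr ((ht i).2.1.trans _ _ _ hy (hqp.2 i))
    rcases hxT with rfl | hxT
    · rcases hyT with rfl | hyT
      · exact Or.inl rfl
      · exact Or.inr (Or.inr hyT)
    · rcases hyT with rfl | hyT
      · exact Or.inr (Or.inl hxT)
      · rcases (haveI := (ht i).2.2 T; @trichotomous _ (fun a b : {s // r i s T} => r i a.1 b.1) _ ⟨x, hxT⟩ ⟨y, hyT⟩) with h1 | h1 | h1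
        · exact Or.inr (Or.inl h1)
        · exact Or.inl (congrArg Subtype.val h1)
        · exact Or.inr (Or.inr h1)
  · refine ⟨(RelIso.mk (Equiv.ofBijective
      (fun a => ⟨(belt κ hB a).1.2 i, ⟨belt κ hB a, belt_mem κ hB a, Or.inl rfl⟩⟩)
      ⟨?_, ?_⟩) ?_).symm⟩
    · intro a a' h
      have h2 : lev (ht i) ((belt κ hB a).1.2 i) = lev (ht i) ((belt κ hB a').1.2 i) :=
        congrArg (fun z => lev (ht i) z.1) h
      rw [hlevF, hlevF] at h2
      exact Ordinal.typein_injective _ h2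
    · rintro ⟨x, p, hp, hx⟩
      rcases hx with rfl | hx
      · exact ⟨p.1.1, Subtype.ext (congrArg (fun q => q.1.2 i) (self_eq_belt ht κ hB hp).symm)⟩
      · have hlt : lev (ht i) x <
            Ordinal.typein ((· < ·) : (Cardinal.ord κ).ToType → (Cardinal.ord κ).ToType → Prop)
              p.1.1 := by
          rw [← p.2 i]
          exact lev_lt (ht i) hx
        obtain ⟨a, ha⟩ := Ordinal.typein_surj
          ((· < ·) : (Cardinal.ord κ).ToType → (Cardinal.ord κ).ToType → Prop)
          (hlt.trans (Ordinal.typein_lt_type _ p.1.1))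
        refine ⟨a, Subtype.ext ?_⟩
        have hap : a < p.1.1 := by
          rw [← Ordinal.typein_lt_typein
            ((· < ·) : (Cardinal.ord κ).ToType → (Cardinal.ord κ).ToType → Prop), ha]
          exact hlt
        have hrel : r i ((belt κ hB a).1.2 i) (p.1.2 i) := by
          have := (belt_rel κ hB hap).2 i
          rwa [← self_eq_belt ht κ hB hp] at this
        refine eq_of_lev_eq (ht i) hrel hx ?_
        rw [hlevF, ha]
    · intro a a'
      show r i ((belt κ hB a).1.2 i) ((belt κ hB a').1.2 i) ↔ a < a'
      constructor
      · intro h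
        have h2 := lev_lt (ht i) h
        rw [hlevF, hlevF, Ordinal.typein_lt_typein] at h2
        exact h2
      · intro h
        exact (belt_rel κ hB h).2 i

theorem Gset_surjective (hB : IsKBranch (PS ht κ) κ B) :
    Gset ht κ (fun i => ⟨Fset ht κ B i, isKBranch_Fset ht κ hB i⟩) = B := by
  ext p
  constructor
  · intro hp
    have hq : belt κ hB p.1.1 ∈ B := belt_mem κ hB p.1.1
    have hcoord : ∀ i, p.1.2 i = (belt κ hB p.1.1).1.2 i := by
      intro i
      refine chain_eq_of_lev_eq (ht i) (isKBranch_Fset ht κ hB i).2.1 (hp i)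
        ⟨belt κ hB p.1.1, hq, Or.inl rfl⟩ ?_
      rw [p.2 i, (belt κ hB p.1.1).2 i, belt_fst ht κ hB]
    have : p = belt κ hB p.1.1 := by
      refine Subtype.ext (Prod.ext ?_ (funext hcoord))
      rw [belt_fst ht κ hB]
    rw [this]
    exact hq
  · intro hp i
    exact ⟨p, hp, Or.inl rfl⟩

end ProdTree

end TreeProdAux

/-- If `γ < κ` (here: `#ι < κ`) and for each `i` there is a tree of cardinality `≤ κ` with
exactly `χ i` many `κ`-branches, then there is a tree of cardinality `≤ κ` with exactly
`|∏ i, χ i|` many `κ`-branches. -/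
theorem tree_branches_prod (κ : Cardinal.{0}) (hℵ : Cardinal.aleph0 < κ)
    (hreg : κ.IsRegular) (hpow : κ ^< κ = κ)
    (ι : Type) (hι : #ι < κ) (α : ι → Type) (r : ∀ i, α i → α i → Prop)
    (htree : ∀ i, IsTreeOrder (r i)) (hcard : ∀ i, #(α i) ≤ κ)
    (χ : ι → Cardinal.{0}) (hbr : ∀ i, #{B : Set (α i) // IsKBranch (r i) κ B} = χ i) :
    ∃ (β : Type) (s : β → β → Prop), IsTreeOrder s ∧ #β ≤ κ ∧
      #{B : Set β // IsKBranch s κ B} = Cardinal.prod χ := by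
  classical
  refine ⟨TreeProdAux.PT htree κ, TreeProdAux.PS htree κ,
    TreeProdAux.PT_isTreeOrder htree κ, ?_, ?_⟩
  · calc #(TreeProdAux.PT htree κ)
        ≤ #((Cardinal.ord κ).ToType × ∀ i, α i) := Cardinal.mk_subtype_le _
      _ = κ * #(∀ i, α i) := by
          rw [Cardinal.mk_prod, Cardinal.lift_id, Cardinal.lift_id,
            Cardinal.mk_toType, Cardinal.card_ord]
      _ ≤ κ * (κ ^ #ι) := by
          refine mul_le_mul' le_rfl ?_
          rw [Cardinal.mk_pi]
          calc Cardinal.prod (fun i => #(α i)) ≤ Cardinal.prod (fun _ => κ) :=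
                Cardinal.prod_le_prod _ _ hcard
            _ = κ ^ #ι := Cardinal.prod_const' ι κ
      _ ≤ κ * κ := mul_le_mul' le_rfl ((Cardinal.le_powerlt κ hι).trans hpow.le)
      _ = κ := Cardinal.mul_eq_self hreg.aleph0_le
  · have hbij : Function.Bijective (fun b : ∀ i, {B : Set (α i) // IsKBranch (r i) κ B} =>
        (⟨TreeProdAux.Gset htree κ b, TreeProdAux.isKBranch_Gset htree κ b⟩ :
          {B : Set (TreeProdAux.PT htree κ) //
            IsKBranch (TreeProdAux.PS htree κ) κ B})) := by
      constructor
      · intro b b' h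
        exact TreeProdAux.Gset_injective htree κ (congrArg Subtype.val h)
      · rintro ⟨B, hB⟩
        exact ⟨fun i => ⟨TreeProdAux.Fset htree κ B i,
          TreeProdAux.isKBranch_Fset htree κ hB i⟩,
          Subtype.ext (TreeProdAux.Gset_surjective htree κ hB)⟩
    refine ((Cardinal.mk_congr (Equiv.ofBijective _ hbij)).symm).trans ?_
    rw [Cardinal.mk_pi]
    exact congrArg Cardinal.prod (funext hbr)
end

section
/- Let κ be uncountable regular with 2^κ = κ⁺, and let Σ be a family of sequences δ̄^α = ⟨δ^α_i : i < κ⟩ (α ranging over an index set of cardinality (2^κ)⁺) such that each sequence is injective. Then there exist α ≠ β and a set I ⊆ κ such that δ^α_i = δ^β_i for all i ∈ I, and {δ^α_i : i ∈ κ ∖ I} ∩ {δ^β_i : i ∈ κ ∖ I} = ∅ (i.e., the sequences form a 'neat pair' agreeing exactly on I). -/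
open Cardinal

namespace NeatAux

noncomputable def stageV (cl : Set Ordinal.{0} → Set Ordinal.{0}) :
    Ordinal.{0} → Set Ordinal.{0}
  | η => ⋃ ζ : Set.Iio η, cl (stageV cl ζ.1)
termination_by η => η
decreasing_by exact ζ.2

theorem stageV_def (cl : Set Ordinal.{0} → Set Ordinal.{0}) (η : Ordinal.{0}) :
    stageV cl η = ⋃ ζ : Set.Iio η, cl (stageV cl ζ.1) := by
  rw [stageV]

theorem stageV_mono (cl : Set Ordinal.{0} → Set Ordinal.{0}) {η η' : Ordinal.{0}}
    (h : η ≤ η') : stageV cl η ⊆ stageV cl η' := by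
  rw [stageV_def cl η, stageV_def cl η']
  exact Set.iUnion_subset fun ζ =>
    Set.subset_iUnion (fun ζ : Set.Iio η' => cl (stageV cl ζ.1)) ⟨ζ.1, ζ.2.trans_le h⟩

theorem cl_subset_stageV (cl : Set Ordinal.{0} → Set Ordinal.{0}) {ζ η : Ordinal.{0}}
    (h : ζ < η) : cl (stageV cl ζ) ⊆ stageV cl η := by
  rw [stageV_def cl η]
  exact Set.subset_iUnion (fun ζ : Set.Iio η => cl (stageV cl ζ.1)) ⟨ζ, h⟩

end NeatAux

/-- Let `κ` be uncountable regular with `2^κ = κ⁺`, and let `⟨δ^a : a ∈ A⟩` be a family of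
injective `κ`-sequences of ordinals indexed by a set of cardinality `(2^κ)⁺`. Then there are
`a ≠ b` and a set `I ⊆ κ` such that the sequences `δ^a` and `δ^b` agree on `I` and their
values outside `I` are disjoint (a "neat pair" agreeing exactly on `I`). -/
theorem neat_pair_of_large_family (κ : Cardinal.{0}) (hℵ : Cardinal.aleph0 < κ)
    (hreg : κ.IsRegular) (hch : 2 ^ κ = Order.succ κ)
    (A : Type 1) (hA : #A = Cardinal.lift.{1} (Order.succ (2 ^ κ)))
    (δ : A → (Cardinal.ord κ).ToType → Ordinal.{0})
    (hinj : ∀ a, Function.Injective (δ a)) :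
    ∃ a b : A, a ≠ b ∧ ∃ I : Set (Cardinal.ord κ).ToType,
      (∀ i ∈ I, δ a i = δ b i) ∧
      ∀ i ∉ I, ∀ j ∉ I, δ a i ≠ δ b j := by
  classical
  let ι := (Cardinal.ord κ).ToType
  have hκ0 : ℵ₀ ≤ κ := hℵ.le
  set μ := Order.succ κ with hμdef
  have hμ0 : ℵ₀ ≤ μ := hκ0.trans (Order.le_succ κ)
  have hμκ : μ ^ κ = μ := by
    rw [← hch, ← Cardinal.power_mul, Cardinal.mul_eq_self hκ0]
  have hι : #ι = κ := by
    show #(Cardinal.ord κ).ToType = κ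
    rw [Cardinal.mk_toType, Cardinal.card_ord]
  have hAne : Nonempty A := by
    rw [← Cardinal.mk_ne_zero_iff, hA]
    simp only [ne_eq, Cardinal.lift_eq_zero]
    exact ne_of_gt ((zero_le).trans_lt (Order.lt_succ _))
  -- the matching relation and witness function on "patterns"
  let M : A → (ι → Option Ordinal.{0}) → Prop := fun b p => ∀ i x, p i = some x → δ b i = x
  let w : (ι → Option Ordinal.{0}) → A := fun p =>
    if h : ∃ b, M b p then h.choose else Classical.arbitrary A
  have hw : ∀ p, (∃ b, M b p) → M (w p) p := by
    intro p h
    simp only [w, dif_pos h]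
    exact h.choose_spec
  -- patterns with values in V
  let Pat : Set Ordinal.{0} → Set (ι → Option Ordinal.{0}) :=
    fun V => {p | ∀ i x, p i = some x → x ∈ V}
  let cl : Set Ordinal.{0} → Set Ordinal.{0} :=
    fun V => V ∪ ⋃ p ∈ Pat V, Set.range (δ (w p))
  have hPatmono : ∀ {V V' : Set Ordinal.{0}}, V ⊆ V' → Pat V ⊆ Pat V' :=
    fun h p hp i x hx => h (hp i x hx)
  have hclmono : ∀ {V V' : Set Ordinal.{0}}, V ⊆ V' → cl V ⊆ cl V' := by
    intro V V' h
    exact Set.union_subset_union h (Set.biUnion_subset_biUnion_left (hPatmono h))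
  have hclsub : ∀ V : Set Ordinal.{0}, V ⊆ cl V := fun V => Set.subset_union_left
  -- counting patterns
  have hPatcard : ∀ V : Set Ordinal.{0}, #V ≤ Cardinal.lift.{1} μ →
      #(Pat V) ≤ Cardinal.lift.{1} μ := by
    intro V hV
    have hemb : #(Pat V) ≤ #(ι → Option V) := by
      refine Cardinal.mk_le_of_injective (f := fun p : Pat V => fun i : ι =>
        if h : ∃ x : Ordinal.{0}, (p : ι → Option Ordinal.{0}) i = some x
        then some (⟨h.choose, p.2 i _ h.choose_spec⟩ : V) else none) ?_
      intro p q hpq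
      apply Subtype.ext
      funext i
      have h := congrFun hpq i
      dsimp only at h
      by_cases hp : ∃ x : Ordinal.{0}, (p : ι → Option Ordinal.{0}) i = some x <;>
        by_cases hq : ∃ x : Ordinal.{0}, (q : ι → Option Ordinal.{0}) i = some x
      · rw [dif_pos hp, dif_pos hq] at h
        have hx : hp.choose = hq.choose := congrArg Subtype.val (Option.some_injective _ h)
        rw [hp.choose_spec, hq.choose_spec, hx]
      · rw [dif_pos hp, dif_neg hq] at h; exact absurd h (by simp)
      · rw [dif_neg hp, dif_pos hq] at h; exact absurd h (by simp)
      · obtain hpn : (p : ι → Option Ordinal.{0}) i = none := by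
          cases hpi : (p : ι → Option Ordinal.{0}) i with
          | none => rfl
          | some x => exact absurd ⟨x, hpi⟩ hp
        obtain hqn : (q : ι → Option Ordinal.{0}) i = none := by
          cases hqi : (q : ι → Option Ordinal.{0}) i with
          | none => rfl
          | some x => exact absurd ⟨x, hqi⟩ hq
        rw [hpn, hqn]
    refine hemb.trans ?_
    rw [Cardinal.mk_arrow]
    rw [Cardinal.lift_id'.{0,1}, Cardinal.mk_option, hι]
    have hliftμ0 : ℵ₀ ≤ Cardinal.lift.{1} μ := Cardinal.aleph0_le_lift.2 hμ0
    have hbase : #V + 1 ≤ Cardinal.lift.{1} μ := by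
      calc #V + 1 ≤ Cardinal.lift.{1} μ + Cardinal.lift.{1} μ :=
            add_le_add hV (Cardinal.one_le_aleph0.trans hliftμ0)
        _ = Cardinal.lift.{1} μ := Cardinal.add_eq_self hliftμ0
    calc (#V + 1) ^ Cardinal.lift.{1} κ ≤ (Cardinal.lift.{1} μ) ^ Cardinal.lift.{1} κ :=
          Cardinal.power_le_power_right hbase
      _ = Cardinal.lift.{1} (μ ^ κ) := by rw [Cardinal.lift_power]
      _ = Cardinal.lift.{1} μ := by rw [hμκ]
  -- counting the closure
  have hclcard : ∀ V : Set Ordinal.{0}, #V ≤ Cardinal.lift.{1} μ →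
      #(cl V) ≤ Cardinal.lift.{1} μ := by
    intro V hV
    have h1 : #(⋃ p ∈ Pat V, Set.range (δ (w p))) ≤ Cardinal.lift.{1} μ := by
      refine (Cardinal.mk_biUnion_le _ _).trans ?_
      have h2 : ⨆ p : Pat V, #(Set.range (δ (w p.1))) ≤ Cardinal.lift.{1} κ := by
        refine ciSup_le' fun p => ?_
        have := Cardinal.mk_range_le_lift (f := δ (w p.1))
        rwa [Cardinal.lift_id'.{0,1}, hι] at this
      calc #(Pat V) * ⨆ p : Pat V, #(Set.range (δ (w p.1)))
          ≤ Cardinal.lift.{1} μ * Cardinal.lift.{1} κ :=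
            mul_le_mul' (hPatcard V hV) h2
        _ = Cardinal.lift.{1} (μ * κ) := by rw [Cardinal.lift_mul]
        _ ≤ Cardinal.lift.{1} μ := by
            rw [Cardinal.lift_le]
            exact (Cardinal.mul_le_max_of_aleph0_le_left hμ0).trans
              (max_le le_rfl (Order.le_succ κ))
    refine (Cardinal.mk_union_le _ _).trans ?_
    have := add_le_add hV h1
    refine this.trans ?_
    rw [← Cardinal.lift_add, Cardinal.lift_le]
    exact le_of_eq (Cardinal.add_eq_self hμ0)
  -- the stages
  set o : Ordinal.{0} := μ.ord with hodef
  set S : Ordinal.{0} → Set Ordinal.{0} := NeatAux.stageV cl with hSdef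
  have holim : Order.IsSuccLimit o := Cardinal.isSuccLimit_ord hμ0
  have hcof : o.cof = μ := (Cardinal.isRegular_succ hκ0).cof_eq
  -- cardinality of stages
  have hstage : ∀ η : Ordinal.{0}, η ≤ o → #(S η) ≤ Cardinal.lift.{1} μ := by
    intro η
    induction η using Ordinal.induction with
    | _ η IH =>
      intro hηo
      rw [hSdef, NeatAux.stageV_def]
      refine (Cardinal.mk_iUnion_le _).trans ?_
      have h2 : ⨆ ζ : Set.Iio η, #(cl (NeatAux.stageV cl ζ.1)) ≤ Cardinal.lift.{1} μ := by
        refine ciSup_le' fun ζ => ?_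
        exact hclcard _ (IH ζ.1 ζ.2 (le_of_lt (ζ.2.trans_le hηo)))
      have h1 : #(Set.Iio η) ≤ Cardinal.lift.{1} μ := by
        rw [Ordinal.mk_Iio_ordinal, Cardinal.lift_le]
        calc η.card ≤ o.card := Ordinal.card_le_card hηo
          _ = μ := Cardinal.card_ord μ
      calc #(Set.Iio η) * ⨆ ζ : Set.Iio η, #(cl (NeatAux.stageV cl ζ.1))
          ≤ Cardinal.lift.{1} μ * Cardinal.lift.{1} μ := mul_le_mul' h1 h2
        _ = Cardinal.lift.{1} (μ * μ) := by rw [Cardinal.lift_mul]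
        _ = Cardinal.lift.{1} μ := by rw [Cardinal.mul_eq_self hμ0]
  -- closure property of the final stage
  have hclosed : ∀ p ∈ Pat (S o), Set.range (δ (w p)) ⊆ S o := by
    intro p hp
    have hex : ∀ i : ι, ∃ ζ : Ordinal.{0}, ζ < o ∧
        ∀ x : Ordinal.{0}, p i = some x → x ∈ cl (NeatAux.stageV cl ζ) := by
      intro i
      cases hpi : p i with
      | none => exact ⟨0, holim.pos, fun x hx => absurd hx (by simp)⟩
      | some x =>
        have hx : x ∈ S o := hp i x hpi
        rw [hSdef, NeatAux.stageV_def] at hx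
        obtain ⟨t, ht⟩ := Set.mem_iUnion.1 hx
        refine ⟨t.1, t.2, fun y hy => ?_⟩
        obtain rfl : x = y := by simpa using hy
        exact ht
    choose g hg1 hg2 using hex
    have hsup : (⨆ i, g i) < o := by
      apply Ordinal.iSup_lt_ord_lift _ hg1
      rw [Cardinal.lift_id, hcof, hι]
      exact Order.lt_succ κ
    set η : Ordinal.{0} := Order.succ (⨆ i, g i) with hηdef
    have hηo : η < o := holim.succ_lt hsup
    have hpη : p ∈ Pat (NeatAux.stageV cl η) := by
      intro i x hx
      have h1 : x ∈ cl (NeatAux.stageV cl (g i)) := hg2 i x hx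
      have h2 : cl (NeatAux.stageV cl (g i)) ⊆ cl (NeatAux.stageV cl (⨆ i, g i)) :=
        hclmono (NeatAux.stageV_mono cl (Ordinal.le_iSup g i))
      exact NeatAux.cl_subset_stageV cl (Order.lt_succ _) (h2 h1)
    have hsub : Set.range (δ (w p)) ⊆ cl (NeatAux.stageV cl η) := by
      refine Set.subset_union_right.trans' ?_
      exact Set.subset_biUnion_of_mem (u := fun p => Set.range (δ (w p))) hpη
    exact hsub.trans (NeatAux.cl_subset_stageV cl hηo)
  -- pick a outside the witness set
  set W : Set A := w '' (Pat (S o)) with hWdef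
  have hWcard : #W ≤ Cardinal.lift.{1} μ :=
    (Cardinal.mk_image_le).trans (hPatcard (S o) (hstage o le_rfl))
  have hexa : ∃ a : A, a ∉ W := by
    by_contra h
    push_neg at h
    have huniv : (Set.univ : Set A) ⊆ W := fun a _ => h a
    have h1 : #A ≤ #W := by
      have := Cardinal.mk_le_mk_of_subset huniv
      rwa [Cardinal.mk_univ] at this
    have h2 : #A ≤ Cardinal.lift.{1} μ := h1.trans hWcard
    rw [hA, hch, Cardinal.lift_le] at h2
    exact absurd h2 (not_le.2 (Order.lt_succ μ))
  obtain ⟨a, ha⟩ := hexa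
  -- the pattern of a over S o
  set p0 : ι → Option Ordinal.{0} :=
    fun i => if δ a i ∈ S o then some (δ a i) else none with hp0def
  have hp0 : p0 ∈ Pat (S o) := by
    intro i x hx
    rw [hp0def] at hx
    dsimp only at hx
    split at hx
    · obtain rfl : δ a i = x := Option.some_injective _ hx
      assumption
    · exact absurd hx (by simp)
  have hMa : M a p0 := by
    intro i x hx
    rw [hp0def] at hx
    dsimp only at hx
    split at hx
    · exact Option.some_injective _ hx
    · exact absurd hx (by simp)
  set b : A := w p0 with hbdef
  have hMb : M b p0 := hw p0 ⟨a, hMa⟩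
  have hbW : b ∈ W := Set.mem_image_of_mem w hp0
  have hab : a ≠ b := fun h => ha (h ▸ hbW)
  refine ⟨a, b, hab, {i : ι | δ a i ∈ S o}, ?_, ?_⟩
  · intro i hi
    have : p0 i = some (δ a i) := by rw [hp0def]; exact if_pos hi
    exact (hMb i (δ a i) this).symm
  · intro i hi j hj hij
    have hbj : δ b j ∈ S o := hclosed p0 hp0 (Set.mem_range_self j)
    rw [← hij] at hbj
    exact hi hbj
end

section
/- Let κ be uncountable regular with 2^κ = κ⁺ and let X be a family of injective κ-sequences of ordinals with |X| > 2^κ, such that for some fixed K ⊆ κ all pairs from X agree on K. Then there exist α ≠ β in X whose sequences agree on a set I ⊇ K and whose values off I are disjoint. -/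
open Cardinal Set

namespace NeatPairAux

open scoped Classical

noncomputable section

variable (κ : Cardinal.{0}) (A : Type 1) [Nonempty A]
  (δ : A → (Cardinal.ord κ).ToType → Ordinal.{0})

/-- The index type of the sequences. -/
abbrev Idx (κ : Cardinal.{0}) := (Cardinal.ord κ).ToType

/-- Traces: partial records of values of a sequence. -/
abbrev Tr := Idx κ → Option Ordinal.{0}

/-- The trace of a sequence on a set `S` of ordinals. -/
def trace (S : Set Ordinal.{0}) (a : A) : Tr κ :=
  fun i => if δ a i ∈ S then some (δ a i) else none

/-- A trace is realizable over `S` if some member of the family has it. -/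
def Realizable (S : Set Ordinal.{0}) (t : Tr κ) : Prop :=
  ∃ a, trace κ A δ S a = t

/-- A chosen witness for each realizable trace. -/
def wit (S : Set Ordinal.{0}) (t : Tr κ) : A :=
  if h : Realizable κ A δ S t then h.choose else Classical.arbitrary A

theorem trace_wit {S : Set Ordinal.{0}} {t : Tr κ} (h : Realizable κ A δ S t) :
    trace κ A δ S (wit κ A δ S t) = t := by
  rw [wit, dif_pos h]; exact h.choose_spec

/-- One closure step: add the ranges of witnesses of all realizable traces. -/
def step (S : Set Ordinal.{0}) : Set Ordinal.{0} :=
  S ∪ ⋃ (t : {t : Tr κ // Realizable κ A δ S t}), Set.range (δ (wit κ A δ S t.1))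

theorem subset_step (S : Set Ordinal.{0}) : S ⊆ step κ A δ S :=
  Set.subset_union_left

theorem range_wit_subset_step (S : Set Ordinal.{0}) {t : Tr κ}
    (h : Realizable κ A δ S t) : Set.range (δ (wit κ A δ S t)) ⊆ step κ A δ S :=
  le_trans (Set.subset_iUnion
    (fun t : {t : Tr κ // Realizable κ A δ S t} => Set.range (δ (wit κ A δ S t.1)))
    ⟨t, h⟩) Set.subset_union_right

/-- The stage index type: a well-order of type `ord κ⁺⁺` (here `(2^κ)⁺ = κ⁺⁺`). -/
abbrev SI := (Cardinal.ord (Order.succ (Cardinal.lift.{1} κ))).ToType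

/-- The closure hierarchy. -/
def stage : SI κ → Set Ordinal.{0} :=
  (IsWellFounded.wf (α := SI κ) (r := (· < ·))).fix
    (fun γ ih => ⋃ (x : {β : SI κ // β < γ}), step κ A δ (ih x.1 x.2))

theorem stage_eq (γ : SI κ) :
    stage κ A δ γ = ⋃ (x : {β : SI κ // β < γ}), step κ A δ (stage κ A δ x.1) := by
  unfold stage
  rw [WellFounded.fix_eq]

theorem step_stage_subset_stage {β γ : SI κ} (h : β < γ) :
    step κ A δ (stage κ A δ β) ⊆ stage κ A δ γ := by
  rw [stage_eq κ A δ γ]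
  exact Set.subset_iUnion
    (fun x : {β : SI κ // β < γ} => step κ A δ (stage κ A δ x.1)) ⟨β, h⟩

end

end NeatPairAux

open NeatPairAux

/-- Let `κ` be uncountable regular with `2^κ = κ⁺`, and let `⟨δ^a : a ∈ A⟩` be a family of
injective `κ`-sequences of ordinals with `#A > 2^κ` such that for some fixed `K ⊆ κ` all
members of the family agree on `K`. Then there are `a ≠ b` and a set `I ⊇ K` such that
`δ^a` and `δ^b` agree on `I` and their values outside `I` are disjoint. -/
theorem neat_pair_above_K (κ : Cardinal.{0}) (hℵ : Cardinal.aleph0 < κ)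
    (hreg : κ.IsRegular) (hch : 2 ^ κ = Order.succ κ)
    (A : Type 1) (hA : Cardinal.lift.{1} (2 ^ κ) < #A)
    (δ : A → (Cardinal.ord κ).ToType → Ordinal.{0})
    (hinj : ∀ a, Function.Injective (δ a))
    (K : Set (Cardinal.ord κ).ToType)
    (hK : ∀ a b : A, ∀ i ∈ K, δ a i = δ b i) :
    ∃ a b : A, a ≠ b ∧ ∃ I : Set (Cardinal.ord κ).ToType, K ⊆ I ∧
      (∀ i ∈ I, δ a i = δ b i) ∧
      ∀ i ∉ I, ∀ j ∉ I, δ a i ≠ δ b j := by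
  -- A is nonempty
  haveI hne : Nonempty A := by
    rcases isEmpty_or_nonempty A with h | h
    · exfalso
      rw [Cardinal.mk_eq_zero A] at hA
      exact (Cardinal.zero_le _).not_gt (lt_of_lt_of_le hA (Cardinal.zero_le _))
    · exact h
  classical
  set κ₁ : Cardinal.{1} := Cardinal.lift.{1} κ with hκ₁def
  set μ : Cardinal.{1} := Order.succ κ₁ with hμdef
  have hκ₁ℵ : Cardinal.aleph0 ≤ κ₁ := by
    rw [hκ₁def, ← Cardinal.lift_aleph0.{1,0}]
    exact Cardinal.lift_le.2 hℵ.le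
  have hμℵ : Cardinal.aleph0 ≤ μ := hκ₁ℵ.trans (Order.le_succ κ₁)
  have hμreg : μ.IsRegular := Cardinal.isRegular_succ hκ₁ℵ
  have h2κ₁ : (2 : Cardinal.{1}) ^ κ₁ = μ := by
    rw [hκ₁def, ← Cardinal.lift_two.{1,0}, ← Cardinal.lift_power, hch,
      Cardinal.lift_succ, hμdef]
  have hμpow : μ ^ κ₁ = μ := by
    rw [← h2κ₁, ← Cardinal.power_mul, Cardinal.mul_eq_self hκ₁ℵ]
  have hκ₁μ : κ₁ < μ := Order.lt_succ κ₁
  have hIdx : Cardinal.lift.{1} #(Idx κ) = κ₁ := by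
    rw [Cardinal.mk_toType, Cardinal.card_ord, hκ₁def]
  have hSI : #(SI κ) = μ := by
    rw [Cardinal.mk_toType, Cardinal.card_ord, hμdef]
  have hμA : μ < #A := by
    rw [hμdef, hκ₁def, ← Cardinal.lift_succ, ← hch]; exact hA
  -- counting realizable traces over a small set
  have hcount : ∀ S : Set Ordinal.{0}, #S ≤ μ →
      #{t : Tr κ // Realizable κ A δ S t} ≤ μ := by
    intro S hS
    -- inject realizable traces into `Idx κ → Option S`
    set F : {t : Tr κ // Realizable κ A δ S t} → (Idx κ → Option S) :=
      fun tp i => if h : δ tp.2.choose i ∈ S then some ⟨δ tp.2.choose i, h⟩ else none with hF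
    have key : ∀ tp i, Option.map Subtype.val (F tp i) = tp.1 i := by
      intro tp i
      have h1 : trace κ A δ S tp.2.choose = tp.1 := tp.2.choose_spec
      rw [← h1, hF, trace]
      by_cases h : δ tp.2.choose i ∈ S
      · simp [h]
      · simp [h]
    have hFi : Function.Injective F := by
      intro tp tp' h
      apply Subtype.ext
      funext i
      rw [← key tp i, ← key tp' i, h]
    calc #{t : Tr κ // Realizable κ A δ S t} ≤ #(Idx κ → Option S) :=
          Cardinal.mk_le_of_injective hFi
      _ = (#S + 1) ^ κ₁ := by
          rw [Cardinal.mk_arrow, Cardinal.mk_option, hIdx, Cardinal.lift_id']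
      _ ≤ μ ^ κ₁ := by
          apply Cardinal.power_le_power_right
          calc #S + 1 ≤ μ + 1 := by exact add_le_add_left hS 1
            _ = μ := Cardinal.add_one_eq hμℵ
      _ = μ := hμpow
  -- each step of the closure stays small
  have hstep : ∀ S : Set Ordinal.{0}, #S ≤ μ → #(step κ A δ S) ≤ μ := by
    intro S hS
    rw [step]
    refine le_trans (Cardinal.mk_union_le _ _) ?_
    have h1 : #(⋃ (t : {t : Tr κ // Realizable κ A δ S t}),
        Set.range (δ (wit κ A δ S t.1))) ≤ μ := by
      refine le_trans Cardinal.mk_iUnion_le_sum_mk ?_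
      refine le_trans (Cardinal.sum_le_sum _ (fun _ => μ) ?_) ?_
      · intro t
        have h := Cardinal.mk_range_le_lift (f := δ (wit κ A δ S t.1))
        rw [Cardinal.lift_id'] at h
        exact le_trans h (by rw [hIdx]; exact hκ₁μ.le)
      · rw [Cardinal.sum_const']
        exact le_trans (mul_le_mul' (hcount S hS) le_rfl) (Cardinal.mul_eq_self hμℵ).le
    calc #S + _ ≤ μ + μ := add_le_add hS h1
      _ = μ := Cardinal.add_eq_self hμℵ
  -- every stage is small
  have hstage : ∀ γ : SI κ, #(stage κ A δ γ) ≤ μ := by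
    intro γ
    induction γ using IsWellFounded.induction (r := (· < · : SI κ → SI κ → Prop)) with
    | ind γ ih =>
      rw [stage_eq]
      refine le_trans Cardinal.mk_iUnion_le_sum_mk ?_
      refine le_trans (Cardinal.sum_le_sum _ (fun _ => μ) ?_) ?_
      · intro x
        exact hstep _ (ih x.1 x.2)
      · rw [Cardinal.sum_const']
        refine le_trans (mul_le_mul' ?_ le_rfl) (Cardinal.mul_eq_self hμℵ).le
        exact le_trans (Cardinal.mk_subtype_le _) hSI.le
  -- the set of all witnesses used anywhere in the hierarchy
  set W : Set A := Set.range
    (fun p : (Σ γ : SI κ, {t : Tr κ // Realizable κ A δ (stage κ A δ γ) t}) =>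
      wit κ A δ (stage κ A δ p.1) p.2.1) with hWdef
  have hW : #W ≤ μ := by
    refine le_trans Cardinal.mk_range_le ?_
    rw [Cardinal.mk_sigma]
    refine le_trans (Cardinal.sum_le_sum _ (fun _ => μ) fun γ => hcount _ (hstage γ)) ?_
    rw [Cardinal.sum_const', hSI]
    exact (Cardinal.mul_eq_self hμℵ).le
  -- pick b outside the witnesses
  obtain ⟨b, hb⟩ : ∃ b : A, b ∉ W := by
    by_contra h
    push_neg at h
    have : W = Set.univ := Set.eq_univ_of_forall h
    rw [this, Cardinal.mk_univ] at hW
    exact hμA.not_ge hW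
  -- the union of the hierarchy
  set M : Set Ordinal.{0} := ⋃ γ : SI κ, step κ A δ (stage κ A δ γ) with hMdef
  have hstepM : ∀ γ : SI κ, step κ A δ (stage κ A δ γ) ⊆ M := by
    intro γ
    exact Set.subset_iUnion (fun γ : SI κ => step κ A δ (stage κ A δ γ)) γ
  -- capture the M-trace of b inside a single stage
  set J := {i : Idx κ // δ b i ∈ M} with hJdef
  have hg : ∀ i : J, ∃ γ : SI κ, δ b i.1 ∈ step κ A δ (stage κ A δ γ) := by
    intro i
    exact Set.mem_iUnion.1 i.2
  choose g hgspec using hg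
  set e := (Ordinal.ToType.mk (o := Cardinal.ord μ)) with hedef
  set f : J → Ordinal.{1} := fun i => (e.symm (g i)).1 with hfdef
  have hfb : ∀ i : J, f i < Cardinal.ord μ := fun i => (e.symm (g i)).2
  have hsup : (⨆ i : J, f i) < Cardinal.ord μ := by
    rcases isEmpty_or_nonempty J with h | h
    · rw [ciSup_of_empty, Ordinal.bot_eq_zero]
      exact (Cardinal.isSuccLimit_ord hμℵ).pos
    · refine Ordinal.iSup_lt_ord_lift ?_ hfb
      rw [hμreg.cof_eq]
      refine lt_of_le_of_lt ?_ hκ₁μ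
      rw [← hIdx]
      exact Cardinal.lift_le.2 (Cardinal.mk_subtype_le _)
  have hsup1 : Order.succ (⨆ i : J, f i) < Cardinal.ord μ :=
    (Cardinal.isSuccLimit_ord hμℵ).succ_lt hsup
  set γstar : SI κ := e ⟨Order.succ (⨆ i : J, f i), hsup1⟩ with hγstar
  have hglt : ∀ i : J, g i < γstar := by
    intro i
    have h1 : e.symm (g i) < (⟨Order.succ (⨆ i : J, f i), hsup1⟩ : Set.Iio (Cardinal.ord μ)) := by
      rw [← Subtype.coe_lt_coe]
      refine lt_of_le_of_lt ?_ (Order.lt_succ _)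
      exact le_ciSup (Ordinal.bddAbove_range f) i
    have := e.lt_iff_lt.2 h1
    rwa [OrderIso.apply_symm_apply] at this
  have hbM : ∀ i : Idx κ, δ b i ∈ M → δ b i ∈ stage κ A δ γstar := by
    intro i hi
    exact step_stage_subset_stage κ A δ (hglt ⟨i, hi⟩) (hgspec ⟨i, hi⟩)
  -- the witness a of b's trace at stage γstar
  set t : Tr κ := trace κ A δ (stage κ A δ γstar) b with htdef
  have hreal : Realizable κ A δ (stage κ A δ γstar) t := ⟨b, rfl⟩
  set a : A := wit κ A δ (stage κ A δ γstar) t with hadef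
  have hatr : trace κ A δ (stage κ A δ γstar) a = t := trace_wit κ A δ hreal
  have haW : a ∈ W := ⟨⟨γstar, ⟨t, hreal⟩⟩, rfl⟩
  have hab : a ≠ b := fun h => hb (h ▸ haW)
  have haM : ∀ i : Idx κ, δ a i ∈ M := by
    intro i
    exact hstepM γstar (range_wit_subset_step κ A δ _ hreal ⟨i, rfl⟩)
  refine ⟨a, b, hab, {i | δ a i = δ b i}, fun i hi => hK a b i hi, fun i hi => hi, ?_⟩
  intro i hi j hj hij
  -- δ a i = δ b j with both off the agreement set: derive a contradiction
  have hx : δ b j ∈ stage κ A δ γstar := by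
    refine hbM j ?_
    rw [← hij]; exact haM i
  have htj : t j = some (δ b j) := by
    rw [htdef, trace, if_pos hx]
  have haj : δ a j = δ b j := by
    have h1 : trace κ A δ (stage κ A δ γstar) a j = some (δ b j) := by
      rw [hatr, htj]
    rw [trace] at h1
    by_cases h : δ a j ∈ stage κ A δ γstar
    · rw [if_pos h] at h1
      exact Option.some_injective _ h1
    · rw [if_neg h] at h1
      exact absurd h1 (by simp)
  exact hj haj
end

section
/- Let κ be uncountable regular with κ^{<κ} = κ. The forcing P_μ (adding a tree of height κ with μ labeled branches) satisfies the κ⁺-chain condition: every antichain in P_μ has size ≤ κ. -/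
open Cardinal

/-- The graph `s` codes a binary sequence with domain exactly `[0, β)`. -/
def IsSeqOn {κ : Cardinal.{0}} (s : Set ((Cardinal.ord κ).ToType × Bool))
    (β : (Cardinal.ord κ).ToType) : Prop :=
  (∀ p ∈ s, p.1 < β) ∧ ∀ γ, γ < β → ∃! b : Bool, (γ, b) ∈ s

/-- Restriction of a (graph of a) binary sequence to `[0, γ)`. -/
def restrictSeq {κ : Cardinal.{0}} (s : Set ((Cardinal.ord κ).ToType × Bool))
    (γ : (Cardinal.ord κ).ToType) : Set ((Cardinal.ord κ).ToType × Bool) :=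
  {p ∈ s | p.1 < γ}

/-- A condition in the standard forcing `P_μ` adding a Kurepa-style tree of height `κ`
with `μ` labeled branches: a subtree `tree` of `2^{<ht}` of size `< κ`, together with a
set `labels ⊆ μ` of size `< κ` and, for each label, an `ht`-branch through `tree`. -/
structure Cond (κ μ : Cardinal.{0}) where
  ht : (Cardinal.ord κ).ToType
  tree : Set (Set ((Cardinal.ord κ).ToType × Bool))
  tree_seq : ∀ s ∈ tree, ∃ β, β < ht ∧ IsSeqOn s β
  tree_closed : ∀ s ∈ tree, ∀ γ, restrictSeq s γ ∈ tree
  tree_small : #↥tree < κ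
  labels : Set (Cardinal.ord μ).ToType
  labels_small : #↥labels < κ
  br : (Cardinal.ord μ).ToType → Set ((Cardinal.ord κ).ToType × Bool)
  br_seq : ∀ δ ∈ labels, IsSeqOn (br δ) ht
  br_mem : ∀ δ ∈ labels, ∀ γ, γ < ht → restrictSeq (br δ) γ ∈ tree
  br_junk : ∀ δ ∉ labels, br δ = ∅

/-- The order of `P_μ`: `q ≤ p` iff the tree of `q` end-extends the tree of `p`, the
labels of `p` are among those of `q`, and each branch of `p` is extended by the
corresponding branch of `q`. -/
def condLE {κ μ : Cardinal.{0}} (q p : Cond κ μ) : Prop :=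
  p.ht ≤ q.ht ∧
  (∀ s, s ∈ p.tree ↔ s ∈ q.tree ∧ ∃ β, β < p.ht ∧ IsSeqOn s β) ∧
  p.labels ⊆ q.labels ∧
  ∀ δ ∈ p.labels, p.br δ ⊆ q.br δ

/-! ### Auxiliary development -/

namespace KurepaCC

open Set

abbrev TT (κ : Cardinal.{0}) : Type := (Cardinal.ord κ).ToType

variable {κ μ : Cardinal.{0}}

theorem bounded_stage (hreg : κ.IsRegular) (B : Set (TT κ)) (hB : #B < κ) :
    ∃ ξ : TT κ, ∀ b ∈ B, b < ξ := by
  letI : IsWellOrder (TT κ) (· < ·) := isWellOrder_lt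
  have h : #B < Ordinal.cof (Ordinal.type ((· < ·) : TT κ → TT κ → Prop)) := by
    rw [Ordinal.type_toType, hreg.cof_eq]; exact hB
  have h' : #B < Order.cof (Cardinal.ord κ).ToType := by
    rw [Ordinal.cof_toType, hreg.cof_eq]; exact hB
  by_contra hc
  push_neg at hc
  exact absurd (Order.cof_le (s := B) hc) (not_le.mpr h')

theorem sup_le_of_forall {ι : Type} (f : ι → Cardinal.{0}) (c : Cardinal)
    (h : ∀ i, f i ≤ c) : (⨆ i, f i) ≤ c := by
  cases isEmpty_or_nonempty ι with
  | inl he => rw [ciSup_of_empty]; exact zero_le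
  | inr hn => exact ciSup_le' h

theorem pow_le (hℵ : ℵ₀ < κ) (hpow : κ ^< κ = κ) {c : Cardinal} (hc : c < κ) :
    (2 : Cardinal) ^ c ≤ κ := by
  calc (2:Cardinal) ^ c ≤ κ ^ c := power_le_power_right ((nat_lt_aleph0 2).le.trans hℵ.le)
  _ ≤ κ ^< κ := le_powerlt κ hc
  _ = κ := hpow

theorem pow_le' (hpow : κ ^< κ = κ) {c : Cardinal} (hc : c < κ) :
    κ ^ c ≤ κ := (le_powerlt κ hc).trans hpow.le

/-! #### Counting sequences -/

def SeqSet (κ : Cardinal.{0}) : Set (Set (TT κ × Bool)) := {s | ∃ β, IsSeqOn s β}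

open Classical in
noncomputable def gfun (s : Set (TT κ × Bool)) : TT κ → Bool :=
  fun γ => if (γ, true) ∈ s then true else false

theorem mem_iff_gfun {s : Set (TT κ × Bool)} {β : TT κ} (h : IsSeqOn s β)
    (p : TT κ × Bool) : p ∈ s ↔ p.1 < β ∧ p.2 = gfun s p.1 := by
  classical
  constructor
  · intro hp
    refine ⟨h.1 p hp, ?_⟩
    obtain ⟨b, hb, hu⟩ := h.2 p.1 (h.1 p hp)
    have hpb : p.2 = b := hu p.2 (by simpa using hp)
    unfold gfun
    by_cases ht : (p.1, true) ∈ s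
    · rw [if_pos ht, hpb, hu true ht]
    · rw [if_neg ht]
      cases hbv : p.2 with
      | false => rfl
      | true =>
        exfalso
        apply ht
        have hmem : (p.1, p.2) ∈ s := by simpa using hp
        rwa [hbv] at hmem
  · rintro ⟨h1, h2⟩
    obtain ⟨b, hb, hu⟩ := h.2 p.1 h1
    unfold gfun at h2
    by_cases ht : (p.1, true) ∈ s
    · rw [if_pos ht] at h2
      have : p = (p.1, true) := by rw [Prod.ext_iff]; exact ⟨rfl, h2⟩
      rw [this]; exact ht
    · rw [if_neg ht] at h2
      have hbf : b = false := by
        cases hbv : b with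
        | false => rfl
        | true => exact absurd (hbv ▸ hb) ht
      have : p = (p.1, false) := by rw [Prod.ext_iff]; exact ⟨rfl, h2⟩
      rw [this]; exact hbf ▸ hb

theorem mk_SeqSet (hℵ : ℵ₀ < κ) (hpow : κ ^< κ = κ) : #(SeqSet κ) ≤ κ := by
  have hinj : ∃ f : SeqSet κ → Σ β : TT κ, (Iio β → Bool), Function.Injective f := by
    refine ⟨fun s => ⟨s.2.choose, fun γ => gfun s.1 γ.1⟩, ?_⟩
    rintro ⟨s, hs⟩ ⟨s', hs'⟩ h
    have hβ : hs.choose = hs'.choose := congrArg Sigma.fst h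
    have hfun : ∀ γ : Iio hs.choose, gfun s γ.1 = gfun s' γ.1 := by
      intro γ
      have h2 := (Sigma.mk.inj_iff.mp h).2
      rw [← hβ] at h2
      exact congrFun (eq_of_heq h2) γ
    have h1 := hs.choose_spec
    have h2 := hs'.choose_spec
    apply Subtype.ext
    ext p
    rw [mem_iff_gfun h1, mem_iff_gfun h2, ← hβ]
    constructor
    · rintro ⟨ha, hb⟩; exact ⟨ha, by rw [hb, hfun ⟨p.1, ha⟩]⟩
    · rintro ⟨ha, hb⟩; exact ⟨ha, by rw [hb, hfun ⟨p.1, ha⟩]⟩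
  obtain ⟨f, hf⟩ := hinj
  calc #(SeqSet κ) ≤ #(Σ β : TT κ, (Iio β → Bool)) := mk_le_of_injective hf
    _ = Cardinal.sum (fun β : TT κ => #(Iio β → Bool)) := mk_sigma _
    _ ≤ Cardinal.sum (fun _ : TT κ => κ) := by
        apply sum_le_sum
        intro β
        rw [← power_def, mk_bool]
        exact pow_le hℵ hpow (mk_Iio_ord_toType β)
    _ = #(TT κ) * κ := sum_const' _ _
    _ = κ * κ := by rw [mk_ord_toType]
    _ = κ := mul_eq_self hℵ.le

/-! #### Counting small subsets -/

theorem exists_le_mk_Iio (hreg : κ.IsRegular) {c : Cardinal} (hc : c < κ) :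
    ∃ β : TT κ, c ≤ #(Iio β) := by
  obtain ⟨B, hB⟩ := le_mk_iff_exists_set.mp (by rw [mk_ord_toType]; exact hc.le :
    c ≤ #(TT κ))
  obtain ⟨ξ, hξ⟩ := bounded_stage hreg B (hB ▸ hc)
  exact ⟨ξ, hB ▸ mk_le_mk_of_subset (fun b hb => hξ b hb)⟩

theorem mk_smallSubsets {α : Type} (hℵ : ℵ₀ < κ) (hreg : κ.IsRegular)
    (hpow : κ ^< κ = κ) (S : Set α) (hS : #S ≤ κ) :
    #({t : Set α | t ⊆ S ∧ #t < κ}) ≤ κ := by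
  have hsub : {t : Set α | t ⊆ S ∧ #t < κ} ⊆
      ⋃ β : TT κ, {t : Set α | t ⊆ S ∧ #t ≤ #(Iio β)} := by
    rintro t ⟨h1, h2⟩
    obtain ⟨β, hβ⟩ := exists_le_mk_Iio hreg h2
    exact mem_iUnion.mpr ⟨β, h1, hβ⟩
  calc #({t : Set α | t ⊆ S ∧ #t < κ})
      ≤ #(⋃ β : TT κ, {t : Set α | t ⊆ S ∧ #t ≤ #(Iio β)}) := mk_le_mk_of_subset hsub
    _ ≤ #(TT κ) * ⨆ β : TT κ, #({t : Set α | t ⊆ S ∧ #t ≤ #(Iio β)}) := mk_iUnion_le _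
    _ ≤ κ * κ := by
        apply mul_le_mul'
        · rw [mk_ord_toType]
        · apply sup_le_of_forall
          intro β
          have h1 : #({t : Set α | t ⊆ S ∧ #t ≤ #(Iio β)}) ≤ max #S ℵ₀ ^ #(Iio β) :=
            mk_bounded_subset_le S _
          refine h1.trans ?_
          calc max #S ℵ₀ ^ #(Iio β) ≤ κ ^ #(Iio β) :=
                power_le_power_right (max_le hS hℵ.le)
            _ ≤ κ := pow_le' hpow (mk_Iio_ord_toType β)
    _ = κ := mul_eq_self hℵ.le

theorem mk_setProd {α β : Type} (D : Set α) (S : Set β) : #(↥(D ×ˢ S)) = #D * #S := by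
  rw [mk_congr (Equiv.Set.prod D S), mk_prod, lift_id, lift_id]

/-! #### Traces -/

abbrev TrSp (κ μ : Cardinal.{0}) : Type :=
  TT κ × Set (Set (TT κ × Bool)) × Set (TT μ × Set (TT κ × Bool))

def gset (p : Cond κ μ) (D : Set (TT μ)) : Set (TT μ × Set (TT κ × Bool)) :=
  {q | q.1 ∈ p.labels ∧ q.1 ∈ D ∧ q.2 = p.br q.1}

def trace (p : Cond κ μ) (D : Set (TT μ)) : TrSp κ μ := ⟨p.ht, p.tree, gset p D⟩

def TraceSet (κ μ : Cardinal.{0}) (D : Set (TT μ)) : Set (TrSp κ μ) :=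
  {x | (x.2.1 ⊆ SeqSet κ ∧ #x.2.1 < κ) ∧ x.2.2 ⊆ D ×ˢ SeqSet κ ∧ #x.2.2 < κ}

theorem trace_mem_TraceSet (p : Cond κ μ) (D : Set (TT μ)) :
    trace p D ∈ TraceSet κ μ D := by
  refine ⟨⟨?_, p.tree_small⟩, ?_, ?_⟩
  · intro s hs
    obtain ⟨β, -, hβ⟩ := p.tree_seq s hs
    exact ⟨β, hβ⟩
  · rintro ⟨δ, s⟩ ⟨h1, h2, h3⟩
    exact ⟨h2, h3 ▸ ⟨p.ht, p.br_seq δ h1⟩⟩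
  · have hf : Function.Injective (fun q : ↥(gset p D) => (⟨q.1.1, q.2.1⟩ : ↥p.labels)) := by
      rintro ⟨⟨δ, s⟩, h1, h2, h3⟩ ⟨⟨δ', s'⟩, h1', h2', h3'⟩ heq
      have hδ : δ = δ' := congrArg Subtype.val heq
      subst hδ
      apply Subtype.ext
      show (δ, s) = (δ, s')
      exact Prod.ext_iff.mpr ⟨rfl, h3.trans h3'.symm⟩
    exact (mk_le_of_injective hf).trans_lt p.labels_small

theorem mk_TraceSet (hℵ : ℵ₀ < κ) (hreg : κ.IsRegular) (hpow : κ ^< κ = κ)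
    (D : Set (TT μ)) (hD : #D ≤ κ) : #(TraceSet κ μ D) ≤ κ := by
  have hf : Function.Injective
      (fun x : ↥(TraceSet κ μ D) =>
        ((x.1.1, ⟨x.1.2.1, x.2.1⟩, ⟨x.1.2.2, x.2.2⟩) :
          TT κ × ↥{t : Set (Set (TT κ × Bool)) | t ⊆ SeqSet κ ∧ #t < κ}
            × ↥{g : Set (TT μ × Set (TT κ × Bool)) | g ⊆ D ×ˢ SeqSet κ ∧ #g < κ})) := by
    rintro ⟨⟨a, b, c⟩, h⟩ ⟨⟨a', b', c'⟩, h'⟩ heq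
    have h1 : a = a' := congrArg Prod.fst heq
    have h2 : b = b' := congrArg (fun z => (z.2.1 : Set (Set (TT κ × Bool)))) heq
    have h3 : c = c' := congrArg (fun z => (z.2.2 : Set (TT μ × Set (TT κ × Bool)))) heq
    apply Subtype.ext
    simp only [h1, h2, h3]
  have hSeq : #(SeqSet κ) ≤ κ := mk_SeqSet hℵ hpow
  calc #(TraceSet κ μ D)
      ≤ #(TT κ × ↥{t : Set (Set (TT κ × Bool)) | t ⊆ SeqSet κ ∧ #t < κ}
            × ↥{g : Set (TT μ × Set (TT κ × Bool)) | g ⊆ D ×ˢ SeqSet κ ∧ #g < κ}) :=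
        mk_le_of_injective hf
    _ = #(TT κ) * (#({t : Set (Set (TT κ × Bool)) | t ⊆ SeqSet κ ∧ #t < κ}) *
          #({g : Set (TT μ × Set (TT κ × Bool)) | g ⊆ D ×ˢ SeqSet κ ∧ #g < κ})) := by
        rw [mk_prod, mk_prod, lift_id, lift_id, lift_id, lift_id]
    _ ≤ κ * (κ * κ) := by
        refine mul_le_mul' (by rw [mk_ord_toType]) (mul_le_mul' ?_ ?_)
        · exact mk_smallSubsets hℵ hreg hpow _ hSeq
        · refine mk_smallSubsets hℵ hreg hpow _ ?_
          rw [mk_setProd]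
          calc #D * #(SeqSet κ) ≤ κ * κ := mul_le_mul' hD hSeq
            _ = κ := mul_eq_self hℵ.le
    _ = κ := by rw [mul_eq_self hℵ.le, mul_eq_self hℵ.le]

/-! #### The closure construction -/

open Classical in
variable (κ μ) in
noncomputable def wit (A : Set (Cond κ μ)) (D : Set (TT μ)) (t : TrSp κ μ) :
    Set (TT μ) :=
  if h : ∃ p, p ∈ A ∧ trace p D = t then h.choose.labels else ∅

theorem wit_le (A : Set (Cond κ μ)) (D : Set (TT μ)) (t : TrSp κ μ) :
    #(wit κ μ A D t) ≤ κ := by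
  unfold wit
  split
  next h => exact h.choose.labels_small.le
  next => simp

theorem wit_spec (A : Set (Cond κ μ)) {D : Set (TT μ)} {t : TrSp κ μ}
    (h : ∃ p, p ∈ A ∧ trace p D = t) :
    ∃ q, q ∈ A ∧ trace q D = t ∧ q.labels = wit κ μ A D t := by
  refine ⟨h.choose, h.choose_spec.1, h.choose_spec.2, ?_⟩
  unfold wit
  rw [dif_pos h]

variable (κ μ) in
noncomputable def Fstep (A : Set (Cond κ μ)) (D : Set (TT μ)) : Set (TT μ) :=
  D ∪ ⋃ t ∈ TraceSet κ μ D, wit κ μ A D t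

theorem subset_Fstep (A : Set (Cond κ μ)) (D : Set (TT μ)) : D ⊆ Fstep κ μ A D :=
  subset_union_left

theorem wit_subset_Fstep (A : Set (Cond κ μ)) {D : Set (TT μ)} {t : TrSp κ μ}
    (ht : t ∈ TraceSet κ μ D) : wit κ μ A D t ⊆ Fstep κ μ A D :=
  fun x hx => Or.inr (mem_biUnion ht hx)

theorem mk_Fstep (hℵ : ℵ₀ < κ) (hreg : κ.IsRegular) (hpow : κ ^< κ = κ)
    (A : Set (Cond κ μ)) (D : Set (TT μ)) (hD : #D ≤ κ) : #(Fstep κ μ A D) ≤ κ := by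
  refine (mk_union_le _ _).trans ?_
  have h1 : #(⋃ t ∈ TraceSet κ μ D, wit κ μ A D t) ≤ κ := by
    refine (mk_biUnion_le _ _).trans ?_
    calc #(TraceSet κ μ D) * ⨆ t : ↥(TraceSet κ μ D), #(wit κ μ A D t.1) ≤ κ * κ :=
        mul_le_mul' (mk_TraceSet hℵ hreg hpow D hD) (sup_le_of_forall _ _ fun t => wit_le A D t.1)
      _ = κ := mul_eq_self hℵ.le
  calc #D + #(⋃ t ∈ TraceSet κ μ D, wit κ μ A D t) ≤ κ + κ := add_le_add hD h1
    _ = κ := add_eq_self hℵ.le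

variable (κ μ) in
noncomputable def Dst (A : Set (Cond κ μ)) : TT κ → Set (TT μ) :=
  (wellFounded_lt (α := TT κ)).fix
    (fun ξ rec => Fstep κ μ A (⋃ η : ↥(Iio ξ), rec η.1 η.2))

theorem Dst_eq (A : Set (Cond κ μ)) (ξ : TT κ) :
    Dst κ μ A ξ = Fstep κ μ A (⋃ η : ↥(Iio ξ), Dst κ μ A η.1) := by
  rw [Dst, WellFounded.fix_eq]

theorem Dst_mono (A : Set (Cond κ μ)) {η ξ : TT κ} (h : η < ξ) :
    Dst κ μ A η ⊆ Dst κ μ A ξ := by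
  rw [Dst_eq A ξ]
  calc Dst κ μ A η ⊆ ⋃ x : ↥(Iio ξ), Dst κ μ A x.1 :=
      subset_iUnion_of_subset ⟨η, h⟩ subset_rfl
    _ ⊆ Fstep κ μ A (⋃ x : ↥(Iio ξ), Dst κ μ A x.1) := subset_Fstep _ _

theorem Dst_le (hℵ : ℵ₀ < κ) (hreg : κ.IsRegular) (hpow : κ ^< κ = κ)
    (A : Set (Cond κ μ)) (ξ : TT κ) : #(Dst κ μ A ξ) ≤ κ := by
  refine (wellFounded_lt (α := TT κ)).induction (C := fun ξ => #(Dst κ μ A ξ) ≤ κ) ξ ?_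
  intro ξ IH
  rw [Dst_eq]
  refine mk_Fstep hℵ hreg hpow A _ ?_
  calc #(⋃ η : ↥(Iio ξ), Dst κ μ A η.1) ≤ #(↥(Iio ξ)) * ⨆ η : ↥(Iio ξ), #(Dst κ μ A η.1) :=
      mk_iUnion_le _
    _ ≤ κ * κ := mul_le_mul' (mk_Iio_ord_toType ξ).le
        (sup_le_of_forall _ _ fun η => IH η.1 η.2)
    _ = κ := mul_eq_self hℵ.le

variable (κ μ) in
noncomputable def DD (A : Set (Cond κ μ)) : Set (TT μ) := ⋃ ξ : TT κ, Dst κ μ A ξ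

theorem Dst_subset_DD (A : Set (Cond κ μ)) (ξ : TT κ) : Dst κ μ A ξ ⊆ DD κ μ A :=
  subset_iUnion (fun ξ => Dst κ μ A ξ) ξ

theorem mk_DD (hℵ : ℵ₀ < κ) (hreg : κ.IsRegular) (hpow : κ ^< κ = κ)
    (A : Set (Cond κ μ)) : #(DD κ μ A) ≤ κ := by
  calc #(DD κ μ A) ≤ #(TT κ) * ⨆ ξ : TT κ, #(Dst κ μ A ξ) := mk_iUnion_le _
    _ ≤ κ * κ := by
        refine mul_le_mul' (by rw [mk_ord_toType]) ?_
        exact sup_le_of_forall _ _ fun ξ => Dst_le hℵ hreg hpow A ξ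
    _ = κ := mul_eq_self hℵ.le

/-! #### Extensionality and compatibility -/

theorem Cond.ext' {p q : Cond κ μ} (h1 : p.ht = q.ht) (h2 : p.tree = q.tree)
    (h3 : p.labels = q.labels) (h4 : p.br = q.br) : p = q := by
  cases p; cases q
  dsimp at h1 h2 h3 h4
  subst h1; subst h2; subst h3; subst h4
  rfl

theorem compat_of_agree (hℵ : ℵ₀ < κ) {p q : Cond κ μ} (hht : q.ht = p.ht)
    (htree : q.tree = p.tree)
    (hbr : ∀ δ, δ ∈ p.labels → δ ∈ q.labels → p.br δ = q.br δ) :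
    ∃ r, condLE r p ∧ condLE r q := by
  classical
  refine ⟨{ ht := p.ht, tree := p.tree, tree_seq := p.tree_seq,
            tree_closed := p.tree_closed, tree_small := p.tree_small,
            labels := p.labels ∪ q.labels,
            labels_small := (mk_union_le _ _).trans_lt
              (add_lt_of_lt hℵ.le p.labels_small q.labels_small),
            br := fun δ => if δ ∈ p.labels then p.br δ else q.br δ,
            br_seq := ?_, br_mem := ?_, br_junk := ?_ }, ?_, ?_⟩
  · intro δ hδ
    by_cases h : δ ∈ p.labels
    · rw [if_pos h]; exact p.br_seq δ h
    · rw [if_neg h]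
      have hq : δ ∈ q.labels := hδ.resolve_left h
      exact hht ▸ q.br_seq δ hq
  · intro δ hδ γ hγ
    by_cases h : δ ∈ p.labels
    · rw [if_pos h]; exact p.br_mem δ h γ hγ
    · rw [if_neg h]
      have hq : δ ∈ q.labels := hδ.resolve_left h
      exact htree ▸ q.br_mem δ hq γ (hht ▸ hγ)
  · intro δ hδ
    rw [if_neg (fun h => hδ (Or.inl h))]
    exact q.br_junk δ (fun h => hδ (Or.inr h))
  · refine ⟨le_refl _, ?_, subset_union_left, ?_⟩
    · intro s
      constructor
      · intro hs
        exact ⟨hs, p.tree_seq s hs⟩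
      · exact fun h => h.1
    · intro δ hδ
      dsimp only
      rw [if_pos hδ]
  · refine ⟨hht.le, ?_, subset_union_right, ?_⟩
    · intro s
      constructor
      · intro hs
        exact ⟨htree ▸ hs, q.tree_seq s hs⟩
      · intro h
        exact htree ▸ h.1
    · intro δ hδ
      dsimp only
      by_cases h : δ ∈ p.labels
      · rw [if_pos h, hbr δ h hδ]
      · rw [if_neg h]

/-! #### The counting branch -/

theorem count_final (hℵ : ℵ₀ < κ) (hreg : κ.IsRegular) (hpow : κ ^< κ = κ)
    (A : Set (Cond κ μ)) (hall : ∀ p ∈ A, p.labels ⊆ DD κ μ A) : #A ≤ κ := by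
  set D := DD κ μ A with hD
  have hf : Function.Injective
      (fun p : ↥A => (⟨trace p.1 D, trace_mem_TraceSet p.1 D⟩ : ↥(TraceSet κ μ D))) := by
    rintro ⟨p, hp⟩ ⟨q, hq⟩ heq
    have htr : trace p D = trace q D := congrArg Subtype.val heq
    have hht : p.ht = q.ht := congrArg Prod.fst htr
    have htree : p.tree = q.tree := congrArg (fun z => z.2.1) htr
    have hgs : gset p D = gset q D := congrArg (fun z => z.2.2) htr
    have hlab : p.labels = q.labels := by
      ext δ
      constructor
      · intro h
        have hm : (δ, p.br δ) ∈ gset p D := ⟨h, hall p hp h, rfl⟩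
        rw [hgs] at hm
        exact hm.1
      · intro h
        have hm : (δ, q.br δ) ∈ gset q D := ⟨h, hall q hq h, rfl⟩
        rw [← hgs] at hm
        exact hm.1
    have hbr : p.br = q.br := by
      funext δ
      by_cases h : δ ∈ p.labels
      · have hm : (δ, p.br δ) ∈ gset p D := ⟨h, hall p hp h, rfl⟩
        rw [hgs] at hm
        exact hm.2.2
      · rw [p.br_junk δ h, q.br_junk δ (hlab ▸ h)]
    exact Subtype.ext (Cond.ext' hht htree hlab hbr)
  calc #A ≤ #(TraceSet κ μ D) := mk_le_of_injective hf
    _ ≤ κ := mk_TraceSet hℵ hreg hpow D (mk_DD hℵ hreg hpow A)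

end KurepaCC

/-- If `κ` is uncountable regular with `κ^{<κ} = κ`, then the forcing `P_μ` satisfies the
`κ⁺`-chain condition: every antichain has cardinality at most `κ`. -/
theorem cond_kappa_plus_cc (κ μ : Cardinal.{0}) (hℵ : Cardinal.aleph0 < κ)
    (hreg : κ.IsRegular) (hpow : κ ^< κ = κ) (hμ : κ ≤ μ)
    (A : Set (Cond κ μ))
    (hA : ∀ p ∈ A, ∀ q ∈ A, p ≠ q → ¬∃ r, condLE r p ∧ condLE r q) :
    #↥A ≤ κ := by
  classical
  open KurepaCC in
  by_cases hall : ∀ p ∈ A, p.labels ⊆ KurepaCC.DD κ μ A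
  · exact KurepaCC.count_final hℵ hreg hpow A hall
  · exfalso
    push_neg at hall
    obtain ⟨p, hp, hnsub⟩ := hall
    -- the trace of `p` on `DD` lives in some stage `Dst ξ₀`
    have hr : #(p.labels ∩ KurepaCC.DD κ μ A : Set _) < κ :=
      (mk_le_mk_of_subset Set.inter_subset_left).trans_lt p.labels_small
    have hst : ∀ x : ↥(p.labels ∩ KurepaCC.DD κ μ A), ∃ ξ : KurepaCC.TT κ,
        (x : (Cardinal.ord μ).ToType) ∈ KurepaCC.Dst κ μ A ξ :=
      fun x => Set.mem_iUnion.mp x.2.2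
    choose g hg using hst
    obtain ⟨ξ₀, hξ₀⟩ := KurepaCC.bounded_stage hreg (Set.range g) (mk_range_le.trans_lt hr)
    have hrsub : p.labels ∩ KurepaCC.DD κ μ A ⊆ KurepaCC.Dst κ μ A ξ₀ := by
      intro x hx
      exact KurepaCC.Dst_mono A (hξ₀ _ (Set.mem_range_self ⟨x, hx⟩)) (hg ⟨x, hx⟩)
    -- a successor stage above ξ₀
    have hone : #({ξ₀} : Set (KurepaCC.TT κ)) < κ := by
      rw [mk_singleton]
      exact one_lt_aleph0.trans hℵ
    obtain ⟨ζ, hζ⟩ := KurepaCC.bounded_stage hreg {ξ₀} hone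
    have hS : {x : KurepaCC.TT κ | ξ₀ < x}.Nonempty := ⟨ζ, hζ ξ₀ rfl⟩
    set ξ₁ := (wellFounded_lt (α := KurepaCC.TT κ)).min {x | ξ₀ < x} hS with hξ₁
    have hξ₀₁ : ξ₀ < ξ₁ := (wellFounded_lt (α := KurepaCC.TT κ)).min_mem {x | ξ₀ < x} hS
    have hmin : ∀ η, η < ξ₁ → η ≤ ξ₀ := by
      intro η hη
      by_contra hc
      exact (wellFounded_lt (α := KurepaCC.TT κ)).not_lt_min {x | ξ₀ < x} (x := η)
        (not_le.mp hc) hη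
    have hUeq : (⋃ η : ↥(Set.Iio ξ₁), KurepaCC.Dst κ μ A η.1) = KurepaCC.Dst κ μ A ξ₀ := by
      apply subset_antisymm
      · refine Set.iUnion_subset ?_
        rintro ⟨η, hη⟩
        rcases eq_or_lt_of_le (hmin η hη) with he | hl
        · subst he; exact subset_rfl
        · exact KurepaCC.Dst_mono A hl
      · exact Set.subset_iUnion_of_subset ⟨ξ₀, hξ₀₁⟩ subset_rfl
    have hstep : KurepaCC.Fstep κ μ A (KurepaCC.Dst κ μ A ξ₀) ⊆ KurepaCC.DD κ μ A := by
      have he : KurepaCC.Fstep κ μ A (KurepaCC.Dst κ μ A ξ₀) = KurepaCC.Dst κ μ A ξ₁ := by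
        rw [KurepaCC.Dst_eq A ξ₁, hUeq]
      rw [he]
      exact KurepaCC.Dst_subset_DD A ξ₁
    -- the witness for the trace of p on stage ξ₀
    have hex : ∃ q, q ∈ A ∧ KurepaCC.trace q (KurepaCC.Dst κ μ A ξ₀) =
        KurepaCC.trace p (KurepaCC.Dst κ μ A ξ₀) := ⟨p, hp, rfl⟩
    obtain ⟨q, hq, htr, hqlab⟩ := KurepaCC.wit_spec A hex
    have hqD : q.labels ⊆ KurepaCC.DD κ μ A := by
      rw [hqlab]
      exact (KurepaCC.wit_subset_Fstep A
        (KurepaCC.trace_mem_TraceSet p (KurepaCC.Dst κ μ A ξ₀))).trans hstep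
    have hne : p ≠ q := fun he => hnsub (he ▸ hqD)
    have hht : q.ht = p.ht := congrArg Prod.fst htr
    have htree : q.tree = p.tree := congrArg (fun z => z.2.1) htr
    have hgs : KurepaCC.gset q (KurepaCC.Dst κ μ A ξ₀) =
        KurepaCC.gset p (KurepaCC.Dst κ μ A ξ₀) := congrArg (fun z => z.2.2) htr
    have hbr : ∀ δ, δ ∈ p.labels → δ ∈ q.labels → p.br δ = q.br δ := by
      intro δ h1 h2
      have hδD : δ ∈ KurepaCC.Dst κ μ A ξ₀ := hrsub ⟨h1, hqD h2⟩
      have hm : (δ, p.br δ) ∈ KurepaCC.gset p (KurepaCC.Dst κ μ A ξ₀) := ⟨h1, hδD, rfl⟩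
      rw [← hgs] at hm
      exact hm.2.2
    exact hA p hp q hq hne (KurepaCC.compat_of_agree hℵ hht htree hbr)
end
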